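/- arXiv:1810.05960 — 9 statements merged into one kernel-verified Lean document; each statement's English description precedes it below -/
import Mathlib

section
/- For every n ≥ 5 there exists an arc-coloring of the complete digraph of order n with color number exactly ⌊n²/4⌋ + 1 that contains no rainbow triangle. (Explicitly: with vertices v_1, …, v_n, color the arcs in R = {v_{2i−1}v_{2j} : 1 ≤ i ≤ ⌈n/2⌉, 1 ≤ j ≤ ⌊n/2⌋} with pairwise distinct colors and color all remaining arcs with a single new color.) -/
/-- The number of distinct colors appearing on the arcs `A` under coloring `C`. -/
def colorNum {n : ℕ} (A : Finset (Fin n × Fin n)) (C : Fin n × Fin n → ℕ) : ℕ :=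
  (A.image C).card

/-- `A` contains a rainbow (directed) triangle under coloring `C`. -/
def hasRainbowTriangle {n : ℕ} (A : Finset (Fin n × Fin n)) (C : Fin n × Fin n → ℕ) : Prop :=
  ∃ u v w : Fin n, (u, v) ∈ A ∧ (v, w) ∈ A ∧ (w, u) ∈ A ∧
    C (u, v) ≠ C (v, w) ∧ C (v, w) ≠ C (w, u) ∧ C (w, u) ≠ C (u, v)

/-- The arc set of the complete digraph on `Fin n`. -/
def completeArcs (n : ℕ) : Finset (Fin n × Fin n) :=
  Finset.univ.filter (fun p => p.1 ≠ p.2)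

lemma count_even (n : ℕ) : ((Finset.range n).filter (fun v => v % 2 = 0)).card = (n+1)/2 := by
  induction n with
  | zero => simp
  | succ n ih =>
    rw [Finset.range_add_one, Finset.filter_insert]
    by_cases h : n % 2 = 0
    · rw [if_pos h, Finset.card_insert_of_notMem (by simp), ih]; omega
    · rw [if_neg h, ih]; omega

lemma count_odd (n : ℕ) : ((Finset.range n).filter (fun v => v % 2 = 1)).card = n/2 := by
  induction n with
  | zero => simp
  | succ n ih =>
    rw [Finset.range_add_one, Finset.filter_insert]
    by_cases h : n % 2 = 1
    · rw [if_pos h, Finset.card_insert_of_notMem (by simp), ih]; omega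
    · rw [if_neg h, ih]; omega

lemma card_fin_filter (n : ℕ) (P : ℕ → Prop) [DecidablePred P] :
    (Finset.univ.filter (fun v : Fin n => P v.val)).card
      = ((Finset.range n).filter P).card := by
  apply Finset.card_bij (fun v _ => v.val)
  · intro a ha
    simp only [Finset.mem_filter, Finset.mem_range, Finset.mem_univ, true_and] at ha ⊢
    exact ⟨a.isLt, ha⟩
  · intro a _ b _ h; exact Fin.ext h
  · intro b hb
    simp only [Finset.mem_filter, Finset.mem_range] at hb
    exact ⟨⟨b, hb.1⟩, by simp [hb.2], rfl⟩

lemma prod_halves (n : ℕ) : (n+1)/2 * (n/2) = n^2/4 := by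
  rcases Nat.even_or_odd n with ⟨k, hk⟩ | ⟨k, hk⟩
  · subst hk
    have h1 : (k + k + 1) / 2 = k := by omega
    have h2 : (k + k) / 2 = k := by omega
    have h3 : (k + k)^2 = 4 * (k * k) := by ring
    rw [h1, h2, h3, Nat.mul_div_cancel_left _ (by norm_num)]
  · subst hk
    have h1 : (2*k + 1 + 1) / 2 = k + 1 := by omega
    have h2 : (2*k + 1) / 2 = k := by omega
    have h3 : (2*k+1)^2 = 4 * ((k+1) * k) + 1 := by ring
    rw [h1, h2, h3, Nat.mul_add_div (by norm_num)]
    omega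

/-- For every `n ≥ 5` there is an arc-coloring of the complete digraph of
order `n` with color number exactly `⌊n²/4⌋ + 1` and no rainbow triangle. -/
theorem stmt_1 (n : ℕ) (hn : 5 ≤ n) :
    ∃ C : Fin n × Fin n → ℕ,
      colorNum (completeArcs n) C = n ^ 2 / 4 + 1 ∧
      ¬ hasRainbowTriangle (completeArcs n) C := by
  classical
  set C : Fin n × Fin n → ℕ :=
    fun p => if p.1.val % 2 = 0 ∧ p.2.val % 2 = 1 then p.1.val * n + p.2.val + 1 else 0
    with hC
  refine ⟨C, ?_, ?_⟩
  · -- color number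
    set E : Finset (Fin n) := Finset.univ.filter (fun v => v.val % 2 = 0) with hE
    set O : Finset (Fin n) := Finset.univ.filter (fun v => v.val % 2 = 1) with hO
    set R : Finset (Fin n × Fin n) := E ×ˢ O with hR
    have hmemR : ∀ p : Fin n × Fin n, p ∈ R ↔ p.1.val % 2 = 0 ∧ p.2.val % 2 = 1 := by
      intro p; simp [hR, hE, hO, Finset.mem_product]
    have hRsub : R ⊆ completeArcs n := by
      intro p hp
      rw [hmemR] at hp
      simp only [completeArcs, Finset.mem_filter, Finset.mem_univ, true_and]
      intro h
      rw [h] at hp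
      omega
    have himg : (completeArcs n).image C = insert 0 (R.image C) := by
      apply Finset.Subset.antisymm
      · intro c hc
        simp only [Finset.mem_image] at hc
        obtain ⟨p, hp, hcp⟩ := hc
        by_cases h : p.1.val % 2 = 0 ∧ p.2.val % 2 = 1
        · refine Finset.mem_insert_of_mem ?_
          exact Finset.mem_image.2 ⟨p, (hmemR p).2 h, hcp⟩
        · have : C p = 0 := by simp only [hC, if_neg h]
          rw [← hcp, this]; exact Finset.mem_insert_self _ _
      · intro c hc
        rcases Finset.mem_insert.1 hc with h | h
        · subst h
          refine Finset.mem_image.2 ⟨(⟨0, by omega⟩, ⟨2, by omega⟩), ?_, ?_⟩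
          · simp only [completeArcs, Finset.mem_filter, Finset.mem_univ, true_and]
            intro h; exact absurd (congrArg Fin.val h) (by simp)
          · simp [hC]
        · obtain ⟨p, hp, hcp⟩ := Finset.mem_image.1 h
          exact Finset.mem_image.2 ⟨p, hRsub hp, hcp⟩
    have hnotmem : 0 ∉ R.image C := by
      intro h
      obtain ⟨p, hp, hcp⟩ := Finset.mem_image.1 h
      rw [hmemR] at hp
      simp only [hC, if_pos hp] at hcp
      omega
    have hinj : Set.InjOn C R := by
      intro p hp q hq hpq
      rw [Finset.mem_coe, hmemR] at hp hq
      simp only [hC, if_pos hp, if_pos hq] at hpq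
      have h1 : p.1.val * n + p.2.val = q.1.val * n + q.2.val := by omega
      have hp2 : p.2.val < n := p.2.isLt
      have hq2 : q.2.val < n := q.2.isLt
      have hn0 : 0 < n := by omega
      have hmod : p.2.val = q.2.val := by
        have := congrArg (· % n) h1
        simpa only [mul_comm _ n, Nat.mul_add_mod, Nat.mod_eq_of_lt hp2,
          Nat.mod_eq_of_lt hq2] using this
      have hdiv : p.1.val = q.1.val := by
        rw [hmod] at h1
        have := Nat.eq_of_mul_eq_mul_right hn0 (by omega : p.1.val * n = q.1.val * n)
        exact this
      exact Prod.ext (Fin.ext hdiv) (Fin.ext hmod)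
    have hcardR : R.card = n^2/4 := by
      rw [hR, Finset.card_product, hE, hO,
        card_fin_filter n (fun v => v % 2 = 0), card_fin_filter n (fun v => v % 2 = 1),
        count_even, count_odd, prod_halves]
    rw [colorNum, himg, Finset.card_insert_of_notMem hnotmem,
      Finset.card_image_of_injOn hinj, hcardR, Nat.add_comm]
  · -- no rainbow triangle
    rintro ⟨u, v, w, _, _, _, h1, h2, h3⟩
    by_cases huv : u.val % 2 = 0 ∧ v.val % 2 = 1
    · have hvw : C (v, w) = 0 := by
        simp only [hC]; rw [if_neg]; rintro ⟨hv, -⟩; omega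
      have hwu : C (w, u) = 0 := by
        simp only [hC]; rw [if_neg]; rintro ⟨-, hu⟩; omega
      exact h2 (hvw.trans hwu.symm)
    · by_cases hvw : v.val % 2 = 0 ∧ w.val % 2 = 1
      · have hwu : C (w, u) = 0 := by
          simp only [hC]; rw [if_neg]; rintro ⟨hw, -⟩; omega
        have huv' : C (u, v) = 0 := by simp only [hC, if_neg huv]
        exact h3 (hwu.trans huv'.symm)
      · have huv' : C (u, v) = 0 := by simp only [hC, if_neg huv]
        have hvw' : C (v, w) = 0 := by simp only [hC, if_neg hvw]
        exact h1 (huv'.trans hvw'.symm)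
end

section
/- Let D be an arc-colored complete digraph of order 4 with color number c(D) ≥ 7. Then D contains a rainbow triangle. -/
namespace Stmt4Aux

/-- the 12 arcs of the complete digraph on 4 vertices -/
def arcL : List (Fin 4 × Fin 4) :=
  [(0,1),(0,2),(0,3),(1,0),(1,2),(1,3),(2,0),(2,1),(2,3),(3,0),(3,1),(3,2)]

/-- the 8 directed triangles, as triples of arc indices -/
def trisL : List (ℕ × ℕ × ℕ) :=
  [(0,4,6), (0,5,9), (1,7,3), (1,8,9), (2,10,3), (2,11,6), (4,8,10), (5,11,7)]

/-- nibble `x` of `r` -/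
def getL : ℕ → ℕ → ℕ
  | r, 0 => r % 16
  | r, x+1 => getL (r / 16) x

/-- replace every one of the low `f` nibbles equal to `lb` by `la` -/
def relabel (la lb : ℕ) : ℕ → ℕ → ℕ
  | _, 0 => 0
  | r, f+1 => (if r % 16 = lb then la else r % 16) + 16 * relabel la lb (r / 16) f

def mergeE (r : ℕ) (e : ℕ × ℕ) : ℕ := relabel (getL r e.1) (getL r e.2) r 12

def cnt (r : ℕ) : ℕ → ℕ
  | 0 => 0
  | i+1 => (if getL r i = i then 1 else 0) + cnt r i

def walk : ℕ → ℕ → Bool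
  | r, 0 => cnt r 12 ≤ 6
  | r, t+1 =>
    cnt r 12 ≤ 6 ||
    (walk (mergeE r ((trisL.getD t (0,0,0)).1, (trisL.getD t (0,0,0)).2.1)) t &&
     (walk (mergeE r ((trisL.getD t (0,0,0)).2.1, (trisL.getD t (0,0,0)).2.2)) t &&
      walk (mergeE r ((trisL.getD t (0,0,0)).2.2, (trisL.getD t (0,0,0)).1)) t))

def initL : ℕ := 0xba9876543210

lemma getL_lt (r x : ℕ) : getL r x < 16 := by
  induction x generalizing r with
  | zero => exact Nat.mod_lt _ (by norm_num)
  | succ x ih => exact ih _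

lemma getL_relabel (la lb : ℕ) (hla : la < 16) :
    ∀ (f r x : ℕ), x < f →
      getL (relabel la lb r f) x = if getL r x = lb then la else getL r x := by
  intro f
  induction f with
  | zero => intro r x hx; omega
  | succ f ih =>
    intro r x hx
    have hd : (if r % 16 = lb then la else r % 16) < 16 := by split <;> omega
    have hr : relabel la lb r (f+1)
        = (if r % 16 = lb then la else r % 16) + 16 * relabel la lb (r/16) f := rfl
    cases x with
    | zero =>
      show relabel la lb r (f+1) % 16 = if r % 16 = lb then la else r % 16
      rw [hr]
      omega
    | succ x =>
      have hdiv : relabel la lb r (f+1) / 16 = relabel la lb (r/16) f := by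
        rw [hr]; omega
      show getL (relabel la lb r (f+1) / 16) x = _
      rw [hdiv, ih (r/16) x (by omega)]
      rfl

lemma mergeE_getL (r : ℕ) (e : ℕ × ℕ) (x : ℕ) (hx : x < 12) :
    getL (mergeE r e) x = if getL r x = getL r e.2 then getL r e.1 else getL r x :=
  getL_relabel _ _ (getL_lt r e.1) 12 r x hx

/-- labels are `< 12` and idempotent -/
def Pinv (r : ℕ) : Prop := ∀ x, x < 12 → getL r x < 12 ∧ getL r (getL r x) = getL r x

/-- colors are constant on label classes -/
def CompatI (c : ℕ → ℕ) (r : ℕ) : Prop := ∀ x, x < 12 → c (getL r x) = c x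

lemma P_merge {r : ℕ} {e : ℕ × ℕ} (hP : Pinv r) (h1 : e.1 < 12) (h2 : e.2 < 12) :
    Pinv (mergeE r e) := by
  intro x hx
  have hla := hP e.1 h1
  rw [mergeE_getL r e x hx]
  split_ifs with h
  · refine ⟨hla.1, ?_⟩
    rw [mergeE_getL r e _ hla.1, hla.2]
    split <;> rfl
  · have hx' := hP x hx
    refine ⟨hx'.1, ?_⟩
    rw [mergeE_getL r e _ hx'.1, hx'.2, if_neg h]

lemma fix_mono {r : ℕ} {e : ℕ × ℕ} (hP : Pinv r) (h1 : e.1 < 12) {x : ℕ} (hx : x < 12)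
    (h : getL (mergeE r e) x = x) : getL r x = x := by
  rw [mergeE_getL r e x hx] at h
  split_ifs at h with h'
  · rw [← h, (hP e.1 h1).2, h]
  · exact h

lemma cnt_le {r r' : ℕ} : ∀ k, (∀ i, i < k → getL r' i = i → getL r i = i) →
    cnt r' k ≤ cnt r k := by
  intro k
  induction k with
  | zero => intro _; rfl
  | succ k ih =>
    intro h
    have := ih (fun i hi => h i (by omega))
    unfold cnt
    split_ifs with h1 h2
    · omega
    · exact absurd (h k (by omega) h1) h2
    · omega
    · omega

lemma cnt_merge_le {r : ℕ} {e : ℕ × ℕ} (hP : Pinv r) (h1 : e.1 < 12) :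
    cnt (mergeE r e) 12 ≤ cnt r 12 :=
  cnt_le 12 (fun i hi => fix_mono hP h1 hi)

lemma compat_merge {c : ℕ → ℕ} {r : ℕ} {e : ℕ × ℕ} (hC : CompatI c r)
    (h1 : e.1 < 12) (h2 : e.2 < 12) (he : c e.1 = c e.2) : CompatI c (mergeE r e) := by
  intro x hx
  rw [mergeE_getL r e x hx]
  split_ifs with h
  · calc c (getL r e.1) = c e.1 := hC e.1 h1
      _ = c e.2 := he
      _ = c (getL r e.2) := (hC e.2 h2).symm
      _ = c (getL r x) := by rw [h]
      _ = c x := hC x hx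
  · exact hC x hx

/-- the C-chosen equal-colored edge of triangle `t` -/
def realE (c : ℕ → ℕ) (t : ℕ) : ℕ × ℕ :=
  if c (trisL.getD t (0,0,0)).1 = c (trisL.getD t (0,0,0)).2.1 then
    ((trisL.getD t (0,0,0)).1, (trisL.getD t (0,0,0)).2.1)
  else if c (trisL.getD t (0,0,0)).2.1 = c (trisL.getD t (0,0,0)).2.2 then
    ((trisL.getD t (0,0,0)).2.1, (trisL.getD t (0,0,0)).2.2)
  else ((trisL.getD t (0,0,0)).2.2, (trisL.getD t (0,0,0)).1)

lemma realE_cases (c : ℕ → ℕ) (t : ℕ) :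
    realE c t = ((trisL.getD t (0,0,0)).1, (trisL.getD t (0,0,0)).2.1) ∨
    realE c t = ((trisL.getD t (0,0,0)).2.1, (trisL.getD t (0,0,0)).2.2) ∨
    realE c t = ((trisL.getD t (0,0,0)).2.2, (trisL.getD t (0,0,0)).1) := by
  unfold realE; split_ifs <;> simp

lemma trisL_bounds : ∀ t, t < 8 → (trisL.getD t (0,0,0)).1 < 12 ∧
    (trisL.getD t (0,0,0)).2.1 < 12 ∧ (trisL.getD t (0,0,0)).2.2 < 12 := by decide

lemma realE_bounds (c : ℕ → ℕ) (t : ℕ) (ht : t < 8) :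
    (realE c t).1 < 12 ∧ (realE c t).2 < 12 := by
  have hb := trisL_bounds t ht
  rcases realE_cases c t with h | h | h <;> rw [h] <;> exact ⟨by omega, by omega⟩

def rfold (c : ℕ → ℕ) : ℕ → ℕ → ℕ
  | r, 0 => r
  | r, t+1 => rfold c (mergeE r (realE c t)) t

set_option maxHeartbeats 1000000 in
lemma rfold_facts (c : ℕ → ℕ) (hEq : ∀ t, t < 8 → c (realE c t).1 = c (realE c t).2) :
    ∀ t, t ≤ 8 → ∀ r, Pinv r → CompatI c r →
      Pinv (rfold c r t) ∧ CompatI c (rfold c r t) ∧ cnt (rfold c r t) 12 ≤ cnt r 12 := by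
  intro t
  induction t with
  | zero => intro _ r hP hC; exact ⟨hP, hC, le_refl _⟩
  | succ t ih =>
    intro ht r hP hC
    have hb := realE_bounds c t (by omega)
    have h := ih (by omega) (mergeE r (realE c t)) (P_merge hP hb.1 hb.2)
      (compat_merge hC hb.1 hb.2 (hEq t (by omega)))
    simp only [rfold]
    exact ⟨h.1, h.2.1, le_trans h.2.2 (cnt_merge_le hP hb.1)⟩

set_option maxHeartbeats 1000000 in
lemma walk_sound (c : ℕ → ℕ) (hEq : ∀ t, t < 8 → c (realE c t).1 = c (realE c t).2) :
    ∀ t, t ≤ 8 → ∀ r, Pinv r → CompatI c r → walk r t = true →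
      cnt (rfold c r t) 12 ≤ 6 := by
  intro t
  induction t with
  | zero =>
    intro _ r _ _ hw
    exact of_decide_eq_true hw
  | succ t ih =>
    intro ht r hP hC hw
    have hb := realE_bounds c t (by omega)
    have hP' := P_merge hP hb.1 hb.2
    have hC' := compat_merge hC hb.1 hb.2 (hEq t (by omega))
    unfold walk at hw
    rw [Bool.or_eq_true, Bool.and_eq_true, Bool.and_eq_true] at hw
    rcases hw with hw | ⟨hw1, hw2, hw3⟩
    · have h := rfold_facts c hEq (t+1) ht r hP hC
      exact le_trans h.2.2 (of_decide_eq_true hw)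
    · simp only [rfold]
      rcases realE_cases c t with h | h | h <;> rw [h] at hP' hC' ⊢
      · exact ih (by omega) _ hP' hC' hw1
      · exact ih (by omega) _ hP' hC' hw2
      · exact ih (by omega) _ hP' hC' hw3

lemma cnt_eq_card (r : ℕ) : ∀ k, ((Finset.range k).filter fun i => getL r i = i).card = cnt r k := by
  intro k
  induction k with
  | zero => rfl
  | succ k ih =>
    rw [Finset.range_add_one, Finset.filter_insert]
    unfold cnt
    split_ifs with h
    · rw [Finset.card_insert_of_notMem (by simp), ih]; omega
    · omega

set_option maxHeartbeats 1000000 in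
lemma init_fix : ∀ x, x < 12 → getL initL x = x := by decide

set_option maxHeartbeats 4000000 in
lemma walk_true : walk initL 8 = true := by decide

set_option maxHeartbeats 1000000 in
lemma arc_index : ∀ p ∈ completeArcs 4, ∃ i : Fin 12,
    arcL.getD i.1 ((0 : Fin 4), (0 : Fin 4)) = p := by decide

end Stmt4Aux

open Stmt4Aux in
/-- Every arc-colored complete digraph of order 4 with color number at least 7
contains a rainbow triangle. -/
theorem stmt_4 (C : Fin 4 × Fin 4 → ℕ)
    (hc : 7 ≤ colorNum (completeArcs 4) C) :
    hasRainbowTriangle (completeArcs 4) C := by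
  by_contra hR
  set cC : ℕ → ℕ := fun i => C (arcL.getD i ((0 : Fin 4), (0 : Fin 4))) with hcC
  -- each directed triangle has two arcs of equal color
  have harc : ∀ u v w : Fin 4, u ≠ v → v ≠ w → w ≠ u →
      (C (u,v) = C (v,w) ∨ C (v,w) = C (w,u) ∨ C (w,u) = C (u,v)) := by
    intro u v w h1 h2 h3
    by_contra h
    push_neg at h
    exact hR ⟨u, v, w,
      Finset.mem_filter.mpr ⟨Finset.mem_univ _, h1⟩,
      Finset.mem_filter.mpr ⟨Finset.mem_univ _, h2⟩,
      Finset.mem_filter.mpr ⟨Finset.mem_univ _, h3⟩,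
      h.1, h.2.1, h.2.2⟩
  have hT : ∀ t, t < 8 → cC (trisL.getD t (0,0,0)).1 = cC (trisL.getD t (0,0,0)).2.1 ∨
      cC (trisL.getD t (0,0,0)).2.1 = cC (trisL.getD t (0,0,0)).2.2 ∨
      cC (trisL.getD t (0,0,0)).2.2 = cC (trisL.getD t (0,0,0)).1 := by
    intro t ht
    interval_cases t
    · exact harc 0 1 2 (by decide) (by decide) (by decide)
    · exact harc 0 1 3 (by decide) (by decide) (by decide)
    · exact harc 0 2 1 (by decide) (by decide) (by decide)
    · exact harc 0 2 3 (by decide) (by decide) (by decide)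
    · exact harc 0 3 1 (by decide) (by decide) (by decide)
    · exact harc 0 3 2 (by decide) (by decide) (by decide)
    · exact harc 1 2 3 (by decide) (by decide) (by decide)
    · exact harc 1 3 2 (by decide) (by decide) (by decide)
  have hReal : ∀ t, t < 8 → cC (realE cC t).1 = cC (realE cC t).2 := by
    intro t ht
    have h3 := hT t ht
    unfold realE
    split_ifs with u v
    · exact u
    · exact v
    · exact (h3.resolve_left u).resolve_left v
  have hPinit : Pinv initL := by
    intro x hx
    rw [init_fix x hx]
    exact ⟨hx, init_fix x hx⟩
  have hCinit : CompatI cC initL := by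
    intro x hx
    rw [init_fix x hx]
  have hfinal := walk_sound cC hReal 8 le_rfl initL hPinit hCinit walk_true
  have hfacts := rfold_facts cC hReal 8 le_rfl initL hPinit hCinit
  set rF := rfold cC initL 8 with hrF
  have hsub : (completeArcs 4).image C ⊆
      ((Finset.range 12).filter fun i => getL rF i = i).image cC := by
    intro y hy
    obtain ⟨p, hp, rfl⟩ := Finset.mem_image.mp hy
    obtain ⟨i, hi⟩ := arc_index p hp
    refine Finset.mem_image.mpr ⟨getL rF i.1, ?_, ?_⟩
    · exact Finset.mem_filter.mpr ⟨Finset.mem_range.mpr (hfacts.1 i.1 i.isLt).1,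
        (hfacts.1 i.1 i.isLt).2⟩
    · calc cC (getL rF i.1) = cC i.1 := hfacts.2.1 i.1 i.isLt
        _ = C p := by rw [hcC]; exact congrArg C hi
  have hle : colorNum (completeArcs 4) C ≤ 6 := by
    calc ((completeArcs 4).image C).card
        ≤ (((Finset.range 12).filter fun i => getL rF i = i).image cC).card :=
          Finset.card_le_card hsub
      _ ≤ ((Finset.range 12).filter fun i => getL rF i = i).card := Finset.card_image_le
      _ = cnt rF 12 := cnt_eq_card rF 12
      _ ≤ 6 := hfinal
  omega
end

section
/- Let n ≥ 3 and let D be an arc-colored strongly connected tournament on n vertices. If c(D) ≥ n(n−1)/2 − n + 3, then D contains a rainbow triangle. -/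
set_option linter.unusedSectionVars false
variable {V : Type*} [DecidableEq V]

def rtTour (S : Finset V) (A : Finset (V × V)) : Prop :=
  (∀ p ∈ A, p.1 ∈ S ∧ p.2 ∈ S ∧ p.1 ≠ p.2) ∧
  (∀ u ∈ S, ∀ v ∈ S, u ≠ v → ((u, v) ∈ A ↔ (v, u) ∉ A))

def rtStrong (S : Finset V) (A : Finset (V × V)) : Prop :=
  ∀ x ∈ S, ∀ y ∈ S, x ≠ y → Relation.TransGen (fun u v => (u, v) ∈ A) x y

theorem rt_transgen_closed {r : V → V → Prop} {P : V → Prop}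
    (hc : ∀ a b, P a → r a b → P b) {x y : V}
    (h : Relation.TransGen r x y) (hx : P x) : P y := by
  induction h with
  | single h => exact hc _ _ hx h
  | tail _ h ih => exact hc _ _ ih h

theorem rt_chain_reach_from {R : V → V → Prop} :
    ∀ (a : V) (l : List V), List.Chain R a l → ∀ y ∈ l, Relation.TransGen R a y := by
  intro a l
  induction l generalizing a with
  | nil => intro _ y hy; simp at hy
  | cons b t ih =>
    intro h y hy
    rcases List.chain_cons.mp h with ⟨hab, hbt⟩
    rcases List.mem_cons.mp hy with rfl | hyt
    · exact Relation.TransGen.single hab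
    · exact Relation.TransGen.head hab (ih b hbt y hyt)

theorem rt_chain_reach_to {R : V → V → Prop} :
    ∀ (l : List V) (a z : V), List.Chain R a (l ++ [z]) →
      ∀ x ∈ a :: l, Relation.TransGen R x z := by
  intro l
  induction l with
  | nil =>
    intro a z h x hx
    rcases List.chain_cons.mp h with ⟨haz, _⟩
    rcases List.mem_cons.mp hx with rfl | hx
    · exact Relation.TransGen.single haz
    · simp at hx
  | cons b t ih =>
    intro a z h x hx
    rcases List.chain_cons.mp h with ⟨hab, hbt⟩
    rcases List.mem_cons.mp hx with rfl | hx
    · exact Relation.TransGen.head hab (ih b z hbt b (List.mem_cons_self))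
    · exact ih b z hbt x hx

theorem rt_chain_mono_mem {R R' : V → V → Prop} :
    ∀ (a : V) (l : List V), List.Chain R a l →
      (∀ u w, u ∈ a :: l → w ∈ a :: l → R u w → R' u w) → List.Chain R' a l := by
  intro a l
  induction l generalizing a with
  | nil => intro _ _; exact List.Chain.nil
  | cons b t ih =>
    intro h himp
    rcases List.chain_cons.mp h with ⟨hab, hbt⟩
    refine List.chain_cons.mpr ⟨himp a b (by simp) (by simp) hab, ?_⟩
    exact ih b hbt (fun u w hu hw => himp u w (by simp at hu ⊢; tauto) (by simp at hw ⊢; tauto))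

theorem rt_find_switch {P : V → Prop} :
    ∀ (l : List V) (x : V), P x → (∃ w ∈ l, ¬ P w) →
      ∃ l₁ u u' l₂, x :: l = l₁ ++ u :: u' :: l₂ ∧ P u ∧ ¬ P u' := by
  intro l
  induction l with
  | nil => intro x _ hw; simp at hw
  | cons b t ih =>
    intro x hx hw
    by_cases hb : P b
    · obtain ⟨w, hwmem, hwP⟩ := hw
      have hwt : w ∈ t := by
        rcases List.mem_cons.mp hwmem with rfl | h
        · exact absurd hb hwP
        · exact h
      obtain ⟨l₁, u, u', l₂, heq, hu, hu'⟩ := ih b hb ⟨w, hwt, hwP⟩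
      exact ⟨x :: l₁, u, u', l₂, by rw [List.cons_append, ← heq], hu, hu'⟩
    · exact ⟨[], x, b, t, rfl, hx, hb⟩

theorem rt_find_switch' {P : V → Prop} :
    ∀ (l : List V) (x : V), ¬ P x → (∃ w ∈ l, P w) →
      ∃ l₁ u u' l₂, l ++ [x] = l₁ ++ u :: u' :: l₂ ∧ P u ∧ ¬ P u' := by
  intro l
  induction l with
  | nil => intro x _ hw; simp at hw
  | cons b t ih =>
    intro x hx hw
    by_cases hb : P b
    · match t, ih with
      | [], _ => exact ⟨[], b, x, [], rfl, hb, hx⟩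
      | c :: t', ih =>
        by_cases hc : P c
        · obtain ⟨l₁, u, u', l₂, heq, hu, hu'⟩ := ih x hx ⟨c, List.mem_cons_self, hc⟩
          exact ⟨b :: l₁, u, u', l₂, by rw [List.cons_append, heq]; rfl, hu, hu'⟩
        · exact ⟨[], b, c, t' ++ [x], by simp, hb, hc⟩
    · obtain ⟨w, hwmem, hwP⟩ := hw
      have hwt : w ∈ t := by
        rcases List.mem_cons.mp hwmem with rfl | h
        · exact absurd hwP hb
        · exact h
      obtain ⟨l₁, u, u', l₂, heq, hu, hu'⟩ := ih x hx ⟨w, hwt, hwP⟩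
      exact ⟨b :: l₁, u, u', l₂, by rw [List.cons_append, heq]; rfl, hu, hu'⟩

theorem rt_chain'_insert {R : V → V → Prop} {l₁ l₂ : List V} {u u' x : V}
    (h : List.Chain' R (l₁ ++ u :: u' :: l₂)) (h1 : R u x) (h2 : R x u') :
    List.Chain' R (l₁ ++ u :: x :: u' :: l₂) := by
  unfold List.Chain' at h ⊢
  rw [List.isChain_append] at h ⊢
  refine ⟨h.1, ?_, ?_⟩
  · rcases h with ⟨-, hc, -⟩
    rw [List.isChain_cons_cons] at hc
    exact List.isChain_cons_cons.mpr ⟨h1, List.isChain_cons_cons.mpr ⟨h2, hc.2⟩⟩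
  · rcases h with ⟨-, -, hg⟩
    intro a ha y hy
    simp only [List.head?_cons, Option.mem_some_iff] at hy ⊢
    exact hg a ha y (by simpa using hy)

theorem rt_decomp {s : List V} {a : V} (h1 : s.head? = some a)
    (h2 : s.getLast? = some a) (h3 : 2 ≤ s.length) :
    ∃ mid, s = a :: (mid ++ [a]) := by
  cases s with
  | nil => simp at h1
  | cons b rest =>
    simp only [List.head?_cons, Option.some_inj] at h1
    obtain rfl : b = a := h1
    have hne : rest ≠ [] := by
      intro h; subst h; simp at h3
    have hlast : rest.getLast hne = b := by
      have h4 : (b :: rest).getLast? = some (rest.getLast hne) := by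
        rw [List.getLast?_cons, List.getLast?_eq_getLast hne]
        simp
      rw [h2] at h4
      exact (Option.some_inj.mp h4).symm
    refine ⟨rest.dropLast, ?_⟩
    conv_lhs => rw [← List.dropLast_append_getLast hne]
    rw [hlast]

theorem rt_tri_through {S : Finset V} {A : Finset (V × V)}
    (hT : rtTour S A) (hS : rtStrong S A) {v : V} (hv : v ∈ S)
    (hx : ∃ x ∈ S, x ≠ v) :
    ∃ a b, (v, a) ∈ A ∧ (a, b) ∈ A ∧ (b, v) ∈ A := by
  obtain ⟨x, hxS, hxv⟩ := hx
  by_contra hno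
  push_neg at hno
  -- v has an out-neighbor
  obtain ⟨w, hvw, -⟩ := Relation.TransGen.head'_iff.mp (hS v hv x hxS (Ne.symm hxv))
  have hcl : ∀ a b, (v, a) ∈ A → (a, b) ∈ A → (v, b) ∈ A := by
    intro a b hva hab
    have hmem := hT.1 _ hab
    have hmemva := hT.1 _ hva
    have hbv : b ≠ v := fun hb =>
      ((hT.2 v hv a hmemva.2.1 hmemva.2.2).mp hva) (hb ▸ hab)
    have hnbv : (b, v) ∉ A := hno a b hva hab
    exact (hT.2 v hv b hmem.2.1 (Ne.symm hbv)).mpr (by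
      intro h; exact hnbv h)
  have hwv : w ≠ v := by
    rintro rfl
    exact (hT.1 _ hvw).2.2 rfl
  have hWS : w ∈ S := (hT.1 _ hvw).2.1
  have : (v, v) ∈ A := rt_transgen_closed (P := fun z => (v, z) ∈ A) hcl
    (hS w hWS v hv hwv) hvw
  exact (hT.1 _ this).2.2 rfl

/-- Cycle extension: a cycle `a :: l` (with wrap-around) of length `< |S|`
extends to one of length one more. -/
theorem rt_cyc_extend {S : Finset V} {A : Finset (V × V)}
    (hT : rtTour S A) (hS : rtStrong S A) {a : V} {l : List V}
    (hnd : (a :: l).Nodup) (hlen : 2 ≤ l.length)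
    (hch : List.Chain (fun u w => (u, w) ∈ A) a (l ++ [a]))
    (hsub : ∀ z ∈ a :: l, z ∈ S) (hcard : (a :: l).length < S.card) :
    ∃ l', (a :: l').Nodup ∧ List.Chain (fun u w => (u, w) ∈ A) a (l' ++ [a]) ∧
      (∀ z ∈ a :: l', z ∈ S) ∧ l'.length = l.length + 1 := by
  classical
  have hndtf : (a :: l).toFinset.card = (a :: l).length :=
    List.toFinset_card_of_nodup hnd
  have htfS : (a :: l).toFinset ⊆ S := by
    intro z hz; exact hsub z (List.mem_toFinset.mp hz)
  -- there is a vertex outside the cycle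
  have hout : ∃ x ∈ S, x ∉ (a :: l).toFinset := by
    by_contra h
    push_neg at h
    have : S ⊆ (a :: l).toFinset := h
    have := Finset.card_le_card this
    omega
  have hcycmem : ∀ z ∈ a :: (l ++ [a]), z ∈ a :: l := by
    intro z hz
    rcases List.mem_cons.mp hz with rfl | hz
    · exact List.mem_cons_self
    · rcases List.mem_append.mp hz with h | h
      · exact List.mem_cons_of_mem _ h
      · simp at h; subst h; exact List.mem_cons_self
  by_cases hA : ∃ x ∈ S, x ∉ (a :: l).toFinset ∧
      (∃ u ∈ a :: l, (u, x) ∈ A) ∧ (∃ u ∈ a :: l, (x, u) ∈ A)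
  · -- Case A: insert x between a switch pair
    obtain ⟨x, hxS, hxout, ⟨uin, huin, harcin⟩, ⟨uout, huout, harcout⟩⟩ := hA
    have hxne : ∀ z ∈ a :: l, z ≠ x := by
      intro z hz; rintro rfl; exact hxout (List.mem_toFinset.mpr hz)
    set P : V → Prop := fun z => (z, x) ∈ A with hP
    have hPnotout : ¬ P uout := by
      intro h
      exact ((hT.2 x hxS uout (hsub _ huout) (Ne.symm (hxne _ huout))).mp harcout) h
    -- find a cyclically adjacent switch pair in a :: (l ++ [a])
    have hsw : ∃ l₁ u u' l₂, a :: (l ++ [a]) = l₁ ++ u :: u' :: l₂ ∧ P u ∧ ¬ P u' := by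
      by_cases hPa : P a
      · have huoutl : uout ∈ l := by
          rcases List.mem_cons.mp huout with rfl | h
          · exact absurd hPa hPnotout
          · exact h
        exact rt_find_switch (l ++ [a]) a hPa
          ⟨uout, List.mem_append.mpr (Or.inl huoutl), hPnotout⟩
      · obtain ⟨l₁, u, u', l₂, heq, hu, hu'⟩ :=
          rt_find_switch' (P := P) (a :: l) a hPa ⟨uin, huin, harcin⟩
        exact ⟨l₁, u, u', l₂, by rw [← heq]; rfl, hu, hu'⟩
    obtain ⟨l₁, u, u', l₂, heq, hPu, hPu'⟩ := hsw
    have hu'mem : u' ∈ a :: l := by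
      apply hcycmem
      rw [heq]
      exact List.mem_append.mpr (Or.inr (by simp))
    have harcxu' : (x, u') ∈ A :=
      (hT.2 x hxS u' (hsub _ hu'mem) (Ne.symm (hxne _ hu'mem))).mpr hPu'
    -- new cyclic sequence
    have hch' : List.Chain' (fun u w => (u, w) ∈ A) (l₁ ++ u :: x :: u' :: l₂) := by
      apply rt_chain'_insert _ hPu harcxu'
      rw [← heq]
      exact hch
    have hhead : (l₁ ++ u :: x :: u' :: l₂).head? = some a := by
      have h1 : (l₁ ++ u :: u' :: l₂).head? = some a := by rw [← heq]; rfl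
      cases l₁ with
      | nil => simpa using h1
      | cons c t => simpa using h1
    have hlast : (l₁ ++ u :: x :: u' :: l₂).getLast? = some a := by
      have h1 : (l₁ ++ u :: u' :: l₂).getLast? = some a := by
        rw [← heq]
        rw [show a :: (l ++ [a]) = (a :: l) ++ [a] by simp]
        rw [List.getLast?_append]
        rfl
      rw [show l₁ ++ u :: x :: u' :: l₂ = (l₁ ++ [u, x]) ++ u' :: l₂ by simp] at *
      rw [show l₁ ++ u :: u' :: l₂ = (l₁ ++ [u]) ++ u' :: l₂ by simp] at h1
      rw [List.getLast?_append] at h1 ⊢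
      exact h1
    have hlen2 : 2 ≤ (l₁ ++ u :: x :: u' :: l₂).length := by
      rw [List.length_append]; simp; omega
    obtain ⟨mid, hmid⟩ := rt_decomp hhead hlast hlen2
    -- permutation: a :: mid ++ [a] ~ x :: (a :: l ++ [a])
    have hperm : List.Perm ((a :: mid) ++ [a]) ((x :: a :: l) ++ [a]) := by
      rw [show (a :: mid) ++ [a] = a :: (mid ++ [a]) by rfl, ← hmid]
      rw [show l₁ ++ u :: x :: u' :: l₂ = (l₁ ++ [u]) ++ x :: (u' :: l₂) by simp]
      refine (List.perm_middle).trans ?_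
      rw [show (l₁ ++ [u]) ++ u' :: l₂ = l₁ ++ u :: u' :: l₂ by simp, ← heq]
      rfl
    have hperm2 : List.Perm (a :: mid) (x :: a :: l) := (List.perm_append_right_iff [a]).mp hperm
    refine ⟨mid, ?_, ?_, ?_, ?_⟩
    · exact hperm2.nodup_iff.mpr (by
        rw [List.nodup_cons]
        exact ⟨fun h => hxne _ h rfl, hnd⟩)
    · have : List.Chain' (fun u w => (u, w) ∈ A) (a :: (mid ++ [a])) := by
        rw [← hmid]; exact hch'
      exact this
    · intro z hz
      have := hperm2.mem_iff.mp hz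
      rcases List.mem_cons.mp this with rfl | h
      · exact hxS
      · exact hsub _ h
    · have := hperm2.length_eq
      simp at this
      omega
  · -- Case B: every outside vertex is dominated (inX) or dominating (inY)
    set inX : V → Prop := fun z => ∀ u ∈ a :: l, (u, z) ∈ A with hinX
    set inY : V → Prop := fun z => ∀ u ∈ a :: l, (z, u) ∈ A with hinY
    have hdich : ∀ x ∈ S, x ∉ (a :: l).toFinset → inX x ∨ inY x := by
      intro x hxS hxout
      have hxne : ∀ z ∈ a :: l, z ≠ x := by
        intro z hz; rintro rfl; exact hxout (List.mem_toFinset.mpr hz)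
      by_cases h1 : ∃ u ∈ a :: l, (u, x) ∈ A
      · left
        intro u hu
        by_contra hnux
        exact hA ⟨x, hxS, hxout, h1,
          ⟨u, hu, (hT.2 x hxS u (hsub _ hu) (Ne.symm (hxne _ hu))).mpr hnux⟩⟩
      · right
        intro u hu
        push_neg at h1
        exact (hT.2 x hxS u (hsub _ hu) (Ne.symm (hxne _ hu))).mpr (h1 u hu)
    -- find an arc from an inX vertex to an inY vertex
    have harc : ∃ x y, x ∈ S ∧ x ∉ (a :: l).toFinset ∧ inX x ∧
        y ∈ S ∧ y ∉ (a :: l).toFinset ∧ inY y ∧ (x, y) ∈ A := by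
      by_contra hno
      push_neg at hno
      by_cases hXne : ∃ x ∈ S, x ∉ (a :: l).toFinset ∧ inX x
      · obtain ⟨x0, hx0S, hx0out, hx0X⟩ := hXne
        have hcl : ∀ z w, (z ∈ S ∧ z ∉ (a :: l).toFinset ∧ inX z) → (z, w) ∈ A →
            (w ∈ S ∧ w ∉ (a :: l).toFinset ∧ inX w) := by
          intro z w ⟨hzS, hzout, hzX⟩ hzw
          have hwS := (hT.1 _ hzw).2.1
          have hwz := (hT.1 _ hzw).2.2
          have hwout : w ∉ (a :: l).toFinset := by
            intro hwin
            have := hzX w (List.mem_toFinset.mp hwin)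
            exact ((hT.2 z hzS w hwS hwz).mp hzw) this
          rcases hdich w hwS hwout with h | h
          · exact ⟨hwS, hwout, h⟩
          · exact absurd hzw (hno z w hzS hzout hzX hwS hwout h)
        have hx0a : x0 ≠ a := by
          rintro rfl; exact hx0out (List.mem_toFinset.mpr (List.mem_cons_self))
        have := rt_transgen_closed hcl (hS x0 hx0S a (hsub a (List.mem_cons_self)) hx0a)
          ⟨hx0S, hx0out, hx0X⟩
        exact this.2.1 (List.mem_toFinset.mpr (List.mem_cons_self))
      · push_neg at hXne
        obtain ⟨y0, hy0S, hy0out⟩ := hout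
        have hcl : ∀ z w, (z ∈ (a :: l).toFinset) → (z, w) ∈ A → w ∈ (a :: l).toFinset := by
          intro z w hzin hzw
          have hwS := (hT.1 _ hzw).2.1
          have hwz := (hT.1 _ hzw).2.2
          by_contra hwout
          rcases hdich w hwS hwout with h | h
          · exact hXne w hwS hwout h
          · have := h z (List.mem_toFinset.mp hzin)
            exact ((hT.2 z ((hT.1 _ hzw).1) w hwS hwz).mp hzw) this
        have hay0 : a ≠ y0 := by
          rintro rfl; exact hy0out (List.mem_toFinset.mpr (List.mem_cons_self))
        have := rt_transgen_closed hcl (hS a (hsub a (List.mem_cons_self)) y0 hy0S hay0)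
          (List.mem_toFinset.mpr (List.mem_cons_self))
        exact hy0out this
    obtain ⟨x, y, hxS, hxout, hxX, hyS, hyout, hyY, hxy⟩ := harc
    -- l = b :: r :: rest'
    obtain ⟨b, r, rest', rfl⟩ : ∃ b r rest', l = b :: r :: rest' := by
      cases l with
      | nil => simp at hlen
      | cons b t =>
        cases t with
        | nil => simp at hlen
        | cons r rest' => exact ⟨b, r, rest', rfl⟩
    refine ⟨x :: y :: r :: rest', ?_, ?_, ?_, by simp⟩
    · -- nodup
      have hxny : x ≠ y := by
        have := (hT.1 _ hxy).2.2; exact this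
      have hxmem : x ∉ a :: b :: r :: rest' := fun h => hxout (List.mem_toFinset.mpr h)
      have hymem : y ∉ a :: b :: r :: rest' := fun h => hyout (List.mem_toFinset.mpr h)
      simp only [List.nodup_cons] at hnd ⊢
      simp only [List.mem_cons] at hxmem hymem hnd ⊢
      push_neg at hxmem hymem
      refine ⟨?_, ?_, ?_, ?_⟩
      · tauto
      · tauto
      · tauto
      · exact ⟨hnd.2.2.1, hnd.2.2.2⟩
    · -- chain
      have hax : (a, x) ∈ A := hxX a (List.mem_cons_self)
      have hyr : (y, r) ∈ A := hyY r (by simp)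
      rcases List.chain_cons.mp hch with ⟨-, hch2⟩
      rcases List.chain_cons.mp hch2 with ⟨-, hch3⟩
      exact List.chain_cons.mpr ⟨hax, List.chain_cons.mpr ⟨hxy,
        List.chain_cons.mpr ⟨hyr, hch3⟩⟩⟩
    · intro z hz
      rcases List.mem_cons.mp hz with rfl | hz
      · exact hsub _ (List.mem_cons_self)
      · rcases List.mem_cons.mp hz with rfl | hz
        · exact hxS
        · rcases List.mem_cons.mp hz with rfl | hz
          · exact hyS
          · exact hsub _ (by simp [List.mem_cons] at hz ⊢; tauto)

theorem rt_cycle_of_card {S : Finset V} {A : Finset (V × V)}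
    (hT : rtTour S A) (hS : rtStrong S A) (h3 : 3 ≤ S.card) :
    ∀ k, 3 ≤ k → k ≤ S.card →
      ∃ a l, (a :: l).Nodup ∧ List.Chain (fun u w => (u, w) ∈ A) a (l ++ [a]) ∧
        (∀ z ∈ a :: l, z ∈ S) ∧ (a :: l).length = k := by
  intro k hk3 hkc
  induction k with
  | zero => omega
  | succ k ih =>
    by_cases hk : k < 3
    · -- k + 1 = 3 : base triangle
      have hk3' : k = 2 := by omega
      subst hk3'
      have hne : S.Nonempty := Finset.card_pos.mp (by omega)
      obtain ⟨v, hv⟩ := hne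
      have hex : ∃ x ∈ S, x ≠ v := by
        by_contra h
        push_neg at h
        have : S ⊆ {v} := fun z hz => Finset.mem_singleton.mpr (h z hz)
        have := Finset.card_le_card this
        simp at this
        omega
      obtain ⟨p, q, hvp, hpq, hqv⟩ := rt_tri_through hT hS hv hex
      have h1 : v ≠ p := (hT.1 _ hvp).2.2
      have h2 : p ≠ q := (hT.1 _ hpq).2.2
      have h3 : q ≠ v := (hT.1 _ hqv).2.2
      refine ⟨v, [p, q], ?_, ?_, ?_, rfl⟩
      · simp [h1, h2, Ne.symm h3]
      · exact List.chain_cons.mpr ⟨hvp, List.chain_cons.mpr ⟨hpq,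
          List.chain_cons.mpr ⟨hqv, List.Chain.nil⟩⟩⟩
      · intro z hz
        rcases List.mem_cons.mp hz with rfl | hz
        · exact hv
        · rcases List.mem_cons.mp hz with rfl | hz
          · exact (hT.1 _ hvp).2.1
          · rcases List.mem_singleton.mp hz with rfl
            exact (hT.1 _ hqv).1
    · have hk3 : 3 ≤ k := by omega
      obtain ⟨a, l, hnd, hch, hsub, hlenk⟩ := ih hk3 (by omega)
      have hlen2 : 2 ≤ l.length := by simp at hlenk; omega
      obtain ⟨l', hnd', hch', hsub', hlen'⟩ :=
        rt_cyc_extend hT hS hnd hlen2 hch hsub (by omega)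
      exact ⟨a, l', hnd', hch', hsub', by simp at hlenk ⊢; omega⟩

/-- In a strong tournament on ≥ 4 vertices there is a vertex whose removal
keeps it strong. -/
theorem rt_del_vertex {S : Finset V} {A : Finset (V × V)}
    (hT : rtTour S A) (hS : rtStrong S A) (h4 : 4 ≤ S.card) :
    ∃ v ∈ S, rtStrong (S.erase v) (A.filter fun p => p.1 ≠ v ∧ p.2 ≠ v) := by
  classical
  obtain ⟨a, l, hnd, hch, hsub, hlen⟩ :=
    rt_cycle_of_card hT hS (by omega) (S.card - 1) (by omega) (by omega)
  set tf := (a :: l).toFinset with htf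
  have htfcard : tf.card = S.card - 1 := by
    rw [htf, List.toFinset_card_of_nodup hnd, hlen]
  have htfS : tf ⊆ S := fun z hz => hsub z (List.mem_toFinset.mp hz)
  have hsd : (S \ tf).card = 1 := by
    rw [Finset.card_sdiff_of_subset htfS]; omega
  obtain ⟨v, hv⟩ := Finset.card_eq_one.mp hsd
  have hvS : v ∈ S := by
    have : v ∈ S \ tf := hv ▸ Finset.mem_singleton_self v
    exact (Finset.mem_sdiff.mp this).1
  have hvtf : v ∉ tf := by
    have : v ∈ S \ tf := hv ▸ Finset.mem_singleton_self v
    exact (Finset.mem_sdiff.mp this).2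
  have htfeq : tf = S.erase v := by
    apply Finset.eq_of_subset_of_card_le
    · intro z hz
      exact Finset.mem_erase.mpr ⟨fun h => hvtf (h ▸ hz), htfS hz⟩
    · rw [Finset.card_erase_of_mem hvS]; omega
  refine ⟨v, hvS, ?_⟩
  -- chain holds for the restricted arc set
  have hch' : List.Chain (fun u w => (u, w) ∈ A.filter fun p => p.1 ≠ v ∧ p.2 ≠ v)
      a (l ++ [a]) := by
    apply rt_chain_mono_mem a (l ++ [a]) hch
    intro u w hu hw hr
    have hu' : u ∈ a :: l := by
      rcases List.mem_cons.mp hu with rfl | h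
      · exact List.mem_cons_self
      · rcases List.mem_append.mp h with h | h
        · exact List.mem_cons_of_mem _ h
        · simp at h; subst h; exact List.mem_cons_self
    have hw' : w ∈ a :: l := by
      rcases List.mem_cons.mp hw with rfl | h
      · exact List.mem_cons_self
      · rcases List.mem_append.mp h with h | h
        · exact List.mem_cons_of_mem _ h
        · simp at h; subst h; exact List.mem_cons_self
    refine Finset.mem_filter.mpr ⟨hr, ?_, ?_⟩
    · intro h; exact hvtf (h ▸ List.mem_toFinset.mpr hu')
    · intro h; exact hvtf (h ▸ List.mem_toFinset.mpr hw')
  intro x hx y hy hxy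
  have hxl : x ∈ a :: l := List.mem_toFinset.mp (show x ∈ tf from htfeq ▸ hx)
  have hyl : y ∈ a :: l := List.mem_toFinset.mp (show y ∈ tf from htfeq ▸ hy)
  set R := fun u w => (u, w) ∈ A.filter fun p => p.1 ≠ v ∧ p.2 ≠ v with hR
  have hto : ∀ z ∈ a :: l, Relation.TransGen R z a :=
    rt_chain_reach_to l a a hch'
  have hfrom : ∀ z ∈ l ++ [a], Relation.TransGen R a z :=
    rt_chain_reach_from a (l ++ [a]) hch'
  rcases List.mem_cons.mp hxl with rfl | hxl'
  · rcases List.mem_cons.mp hyl with rfl | hyl'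
    · exact absurd rfl hxy
    · exact hfrom y (List.mem_append.mpr (Or.inl hyl'))
  · rcases List.mem_cons.mp hyl with rfl | hyl'
    · exact hto x hxl
    · exact (hto x hxl).trans (hfrom y (List.mem_append.mpr (Or.inl hyl')))

theorem rt_main (N : ℕ) (h3 : 3 ≤ N) :
    ∀ (S : Finset V) (A : Finset (V × V)) (C : V × V → ℕ), S.card = N →
      rtTour S A → rtStrong S A →
      (∀ u v w : V, (u, v) ∈ A → (v, w) ∈ A → (w, u) ∈ A →
        C (u, v) = C (v, w) ∨ C (v, w) = C (w, u) ∨ C (w, u) = C (u, v)) →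
      (A.image C).card ≤ N * (N - 1) / 2 - N + 2 := by
  induction N, h3 using Nat.le_induction with
  | base =>
    intro S A C hcard hT hS hnr
    obtain ⟨v, hv⟩ := Finset.card_pos.mp (show 0 < S.card by omega)
    have hex : ∃ x ∈ S, x ≠ v := by
      by_contra h
      push_neg at h
      have : S ⊆ {v} := fun z hz => Finset.mem_singleton.mpr (h z hz)
      have := Finset.card_le_card this
      simp at this; omega
    obtain ⟨p, q, h1, h2, h3t⟩ := rt_tri_through hT hS hv hex
    have hvp : v ≠ p := (hT.1 _ h1).2.2
    have hpq : p ≠ q := (hT.1 _ h2).2.2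
    have hqv : q ≠ v := (hT.1 _ h3t).2.2
    have hpS : p ∈ S := (hT.1 _ h1).2.1
    have hqS : q ∈ S := (hT.1 _ h3t).1
    have hvq : v ≠ q := Ne.symm hqv
    have hSeq : S = {v, p, q} := by
      symm
      apply Finset.eq_of_subset_of_card_le
      · intro z hz
        simp only [Finset.mem_insert, Finset.mem_singleton] at hz
        rcases hz with rfl | rfl | rfl <;> assumption
      · have : ({v, p, q} : Finset V).card = 3 := by
          rw [Finset.card_insert_of_notMem (by simp [hvp, hvq]),
            Finset.card_insert_of_notMem (by simp [hpq]), Finset.card_singleton]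
        omega
    have nb1 : (p, v) ∉ A := (hT.2 v hv p hpS hvp).mp h1
    have nb2 : (q, p) ∉ A := (hT.2 p hpS q hqS hpq).mp h2
    have nb3 : (v, q) ∉ A := (hT.2 q hqS v hv hqv).mp h3t
    have hAeq : A = {(v, p), (p, q), (q, v)} := by
      apply Finset.Subset.antisymm
      · intro z hz
        obtain ⟨hz1, hz2, hz3⟩ := hT.1 z hz
        rw [hSeq] at hz1 hz2
        obtain ⟨zx, zy⟩ := z
        simp only [Finset.mem_insert, Finset.mem_singleton] at hz1 hz2 ⊢
        simp only at hz3
        rcases hz1 with rfl | rfl | rfl <;> rcases hz2 with rfl | rfl | rfl <;>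
          simp_all [Prod.ext_iff]
      · intro z hz
        simp only [Finset.mem_insert, Finset.mem_singleton] at hz
        rcases hz with rfl | rfl | rfl <;> assumption
    have himg : A.image C = {C (v, p), C (p, q), C (q, v)} := by
      rw [hAeq]
      simp [Finset.image_insert]
    rw [himg]
    have hcases := hnr v p q h1 h2 h3t
    have hle2 : ({C (v, p), C (p, q), C (q, v)} : Finset ℕ).card ≤ 2 := by
      rcases hcases with h | h | h
      · refine le_trans (Finset.card_le_card (show ({C (v, p), C (p, q), C (q, v)} : Finset ℕ)
          ⊆ {C (p, q), C (q, v)} by intro z hz; simp at hz ⊢; rcases hz with rfl | rfl | rfl <;> tauto))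
          (le_trans (Finset.card_insert_le _ _) (by simp))
      · refine le_trans (Finset.card_le_card (show ({C (v, p), C (p, q), C (q, v)} : Finset ℕ)
          ⊆ {C (v, p), C (p, q)} by intro z hz; simp at hz ⊢; rcases hz with rfl | rfl | rfl <;> tauto))
          (le_trans (Finset.card_insert_le _ _) (by simp))
      · refine le_trans (Finset.card_le_card (show ({C (v, p), C (p, q), C (q, v)} : Finset ℕ)
          ⊆ {C (v, p), C (p, q)} by intro z hz; simp at hz ⊢; rcases hz with rfl | rfl | rfl <;> tauto))
          (le_trans (Finset.card_insert_le _ _) (by simp))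
    omega
  | succ N hN ih =>
    intro S A C hcard hT hS hnr
    obtain ⟨v, hvS, hS'⟩ := rt_del_vertex hT hS (by omega)
    set A' := A.filter (fun p => p.1 ≠ v ∧ p.2 ≠ v) with hA'
    have hmemA' : ∀ x y : V, x ≠ v → y ≠ v → ((x, y) ∈ A' ↔ (x, y) ∈ A) := by
      intro x y hx hy
      rw [hA', Finset.mem_filter]
      simp [hx, hy]
    have hT' : rtTour (S.erase v) A' := by
      constructor
      · intro p hp
        rw [hA', Finset.mem_filter] at hp
        obtain ⟨hpA, hp1, hp2⟩ := hp
        obtain ⟨hm1, hm2, hm3⟩ := hT.1 p hpA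
        exact ⟨Finset.mem_erase.mpr ⟨hp1, hm1⟩, Finset.mem_erase.mpr ⟨hp2, hm2⟩, hm3⟩
      · intro u hu w hw huw
        obtain ⟨hu1, hu2⟩ := Finset.mem_erase.mp hu
        obtain ⟨hw1, hw2⟩ := Finset.mem_erase.mp hw
        rw [hmemA' u w hu1 hw1, hmemA' w u hw1 hu1]
        exact hT.2 u hu2 w hw2 huw
    have hnr' : ∀ u v w : V, (u, v) ∈ A' → (v, w) ∈ A' → (w, u) ∈ A' →
        C (u, v) = C (v, w) ∨ C (v, w) = C (w, u) ∨ C (w, u) = C (u, v) := by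
      intro a b c ha hb hc
      exact hnr a b c (Finset.filter_subset _ _ ha) (Finset.filter_subset _ _ hb)
        (Finset.filter_subset _ _ hc)
    have hcard' : (S.erase v).card = N := by
      rw [Finset.card_erase_of_mem hvS]; omega
    have hIH := ih (S.erase v) A' C hcard' hT' hS' hnr'
    -- triangle through v
    have hex : ∃ x ∈ S, x ≠ v := by
      by_contra h
      push_neg at h
      have : S ⊆ {v} := fun z hz => Finset.mem_singleton.mpr (h z hz)
      have := Finset.card_le_card this
      simp at this; omega
    obtain ⟨p, q, h1, h2, h3t⟩ := rt_tri_through hT hS hvS hex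
    have hpv : p ≠ v := Ne.symm (hT.1 _ h1).2.2
    have hqv : q ≠ v := (hT.1 _ h3t).2.2
    set Av := A.filter (fun p => p.1 = v ∨ p.2 = v) with hAv
    have hsplit : A.image C ⊆ A'.image C ∪ Av.image C := by
      intro z hz
      obtain ⟨p0, hp0, rfl⟩ := Finset.mem_image.mp hz
      by_cases h : p0.1 = v ∨ p0.2 = v
      · exact Finset.mem_union_right _ (Finset.mem_image.mpr
          ⟨p0, Finset.mem_filter.mpr ⟨hp0, h⟩, rfl⟩)
      · push_neg at h
        exact Finset.mem_union_left _ (Finset.mem_image.mpr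
          ⟨p0, Finset.mem_filter.mpr ⟨hp0, h.1, h.2⟩, rfl⟩)
    have hAvcard : Av.card ≤ N := by
      have : Av.card ≤ (S.erase v).card := by
        apply Finset.card_le_card_of_injOn (fun p => if p.1 = v then p.2 else p.1)
        · intro p hp
          obtain ⟨hpA, hpv⟩ := Finset.mem_filter.mp hp
          obtain ⟨hm1, hm2, hm3⟩ := hT.1 p hpA
          by_cases h : p.1 = v
          · simp only [h, if_pos]
            exact Finset.mem_erase.mpr ⟨fun he => hm3 (h.trans he.symm), hm2⟩
          · simp only [h, if_neg, if_false]
            exact Finset.mem_erase.mpr ⟨h, hm1⟩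
        · intro p hp q hq hfeq
          rw [Finset.mem_coe, Finset.mem_filter] at hp hq
          obtain ⟨hpA, hpv⟩ := hp
          obtain ⟨hqA, hqv⟩ := hq
          obtain ⟨hpm1, hpm2, hpm3⟩ := hT.1 p hpA
          obtain ⟨hqm1, hqm2, hqm3⟩ := hT.1 q hqA
          by_cases h : p.1 = v <;> by_cases h' : q.1 = v <;>
            simp only [h, h', if_pos, if_neg, if_false, if_true] at hfeq
          · have hp2 : p.2 = q.2 := hfeq
            exact Prod.ext (h.trans h'.symm) hp2
          · -- p.1 = v, q.1 ≠ v so q.2 = v ; p = (v, q.1), q = (q.1, v) both in A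
            have hq2 : q.2 = v := by tauto
            exfalso
            have hpA' : (v, q.1) ∈ A := by
              have : p = (v, q.1) := Prod.ext h hfeq
              rwa [this] at hpA
            have hqA' : (q.1, v) ∈ A := by
              have : q = (q.1, v) := Prod.ext rfl hq2
              rwa [this] at hqA
            have hne : v ≠ q.1 := fun he => hqm3 (he ▸ hq2.symm) |>.elim
            exact (hT.2 v hvS q.1 hqm1 hne).mp hpA' hqA'
          · have hp2 : p.2 = v := by tauto
            exfalso
            have hqA' : (v, p.1) ∈ A := by
              have : q = (v, p.1) := Prod.ext h' hfeq.symm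
              rwa [this] at hqA
            have hpA' : (p.1, v) ∈ A := by
              have : p = (p.1, v) := Prod.ext rfl hp2
              rwa [this] at hpA
            have hne : v ≠ p.1 := fun he => hpm3 (he ▸ hp2.symm) |>.elim
            exact (hT.2 v hvS p.1 hpm1 hne).mp hqA' hpA'
          · have hp2 : p.2 = v := by tauto
            have hq2 : q.2 = v := by tauto
            exact Prod.ext hfeq (hp2.trans hq2.symm)
      omega
    -- color accounting
    have hvpAv : (v, p) ∈ Av := Finset.mem_filter.mpr ⟨h1, Or.inl rfl⟩
    have hqvAv : (q, v) ∈ Av := Finset.mem_filter.mpr ⟨h3t, Or.inr rfl⟩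
    have hpqA' : (p, q) ∈ A' := (hmemA' p q hpv hqv).mpr h2
    have hkey : (A.image C).card ≤ (A'.image C).card + N - 1 := by
      rcases hnr v p q h1 h2 h3t with hcol | hcol | hcol
      · -- C(v,p) = C(p,q) : common color in both images
        have hcommon : C (p, q) ∈ A'.image C ∩ Av.image C := by
          refine Finset.mem_inter.mpr ⟨Finset.mem_image_of_mem C hpqA', ?_⟩
          exact Finset.mem_image.mpr ⟨(v, p), hvpAv, hcol⟩
        have h5 := Finset.card_union_add_card_inter (A'.image C) (Av.image C)
        have h6 : 1 ≤ (A'.image C ∩ Av.image C).card :=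
          Finset.card_pos.mpr ⟨_, hcommon⟩
        have h7 := Finset.card_le_card hsplit
        have h8 : (Av.image C).card ≤ Av.card := Finset.card_image_le
        omega
      · -- C(p,q) = C(q,v) : common color
        have hcommon : C (p, q) ∈ A'.image C ∩ Av.image C := by
          refine Finset.mem_inter.mpr ⟨Finset.mem_image_of_mem C hpqA', ?_⟩
          exact Finset.mem_image.mpr ⟨(q, v), hqvAv, hcol.symm⟩
        have h5 := Finset.card_union_add_card_inter (A'.image C) (Av.image C)
        have h6 : 1 ≤ (A'.image C ∩ Av.image C).card :=
          Finset.card_pos.mpr ⟨_, hcommon⟩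
        have h7 := Finset.card_le_card hsplit
        have h8 : (Av.image C).card ≤ Av.card := Finset.card_image_le
        omega
      · -- C(q,v) = C(v,p) : two arcs at v share a color
        have himgAv : Av.image C = (Av.erase (v, p)).image C := by
          apply Finset.Subset.antisymm
          · intro z hz
            obtain ⟨p0, hp0, rfl⟩ := Finset.mem_image.mp hz
            by_cases h : p0 = (v, p)
            · subst h
              refine Finset.mem_image.mpr ⟨(q, v), ?_, hcol⟩
              refine Finset.mem_erase.mpr ⟨?_, hqvAv⟩
              intro he
              have := congrArg Prod.fst he
              exact hqv this
            · exact Finset.mem_image.mpr ⟨p0, Finset.mem_erase.mpr ⟨h, hp0⟩, rfl⟩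
          · exact Finset.image_subset_image (Finset.erase_subset _ _)
        have h8 : (Av.image C).card ≤ Av.card - 1 := by
          rw [himgAv]
          refine le_trans Finset.card_image_le ?_
          rw [Finset.card_erase_of_mem hvpAv]
        have h5 := Finset.card_union_le (A'.image C) (Av.image C)
        have h7 := Finset.card_le_card hsplit
        have h9 : 1 ≤ Av.card := Finset.card_pos.mpr ⟨_, hvpAv⟩
        omega
    -- arithmetic
    obtain ⟨K, rfl⟩ : ∃ K, N = K + 1 := ⟨N - 1, by omega⟩
    have e0 : K + 1 + 1 - 1 = K + 1 := by omega
    have e1 : K + 1 - 1 = K := by omega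
    rw [e0]
    rw [e1] at hIH
    obtain ⟨M, hM⟩ : ∃ M, (K + 1) * K = M + M := by
      rcases Nat.even_mul_succ_self K with ⟨M, hM⟩
      exact ⟨M, by rw [Nat.mul_comm]; omega⟩
    have e2 : (K + 1 + 1) * (K + 1) = (K + 1) * K + 2 * (K + 1) := by ring
    have e3 : (K + 1) * K / 2 = M := by omega
    have e4 : (K + 1 + 1) * (K + 1) / 2 = M + (K + 1) := by omega
    rw [e4]
    rw [e3] at hIH
    have e5 : (K + 1) * 2 ≤ (K + 1) * K := Nat.mul_le_mul_left _ (by omega)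
    omega

/-- An arc-colored strongly connected tournament on `n ≥ 3` vertices with
`c(D) ≥ n(n-1)/2 - n + 3` contains a rainbow triangle. -/
theorem stmt_12 (n : ℕ) (hn : 3 ≤ n) (A : Finset (Fin n × Fin n))
    (hirr : ∀ v : Fin n, (v, v) ∉ A)
    (htour : ∀ u v : Fin n, u ≠ v → ((u, v) ∈ A ↔ (v, u) ∉ A))
    (hstrong : ∀ x y : Fin n, x ≠ y →
      Relation.TransGen (fun u v : Fin n => (u, v) ∈ A) x y)
    (C : Fin n × Fin n → ℕ)
    (hc : n * (n - 1) / 2 - n + 3 ≤ colorNum A C) :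
    hasRainbowTriangle A C := by
  by_contra hno
  have hT : rtTour (Finset.univ : Finset (Fin n)) A := by
    constructor
    · intro p hp
      refine ⟨Finset.mem_univ _, Finset.mem_univ _, ?_⟩
      intro h
      apply hirr p.1
      have he : p = (p.1, p.1) := Prod.ext rfl h.symm
      rwa [he] at hp
    · intro u _ v _ huv
      exact htour u v huv
  have hS : rtStrong (Finset.univ : Finset (Fin n)) A :=
    fun x _ y _ hxy => hstrong x y hxy
  have hnr : ∀ u v w : Fin n, (u, v) ∈ A → (v, w) ∈ A → (w, u) ∈ A →
      C (u, v) = C (v, w) ∨ C (v, w) = C (w, u) ∨ C (w, u) = C (u, v) := by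
    intro u v w h1 h2 h3
    by_contra h
    push_neg at h
    exact hno ⟨u, v, w, h1, h2, h3, h.1, h.2.1, h.2.2⟩
  have hcard : (Finset.univ : Finset (Fin n)).card = n := by simp
  have hmain := rt_main n hn Finset.univ A C hcard hT hS hnr
  unfold colorNum at hc
  obtain ⟨K, rfl⟩ : ∃ K, n = K + 1 := ⟨n - 1, by omega⟩
  have e1 : K + 1 - 1 = K := by omega
  rw [e1] at hc hmain
  obtain ⟨M, hM⟩ : ∃ M, (K + 1) * K = M + M := by
    rcases Nat.even_mul_succ_self K with ⟨M, hM⟩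
    exact ⟨M, by rw [Nat.mul_comm]; omega⟩
  have e3 : (K + 1) * K / 2 = M := by omega
  rw [e3] at hc hmain
  have e5 : (K + 1) * 2 ≤ (K + 1) * K := Nat.mul_le_mul_left _ (by omega)
  omega
end

section
/- For every n ≥ 3 there exists an arc-colored strongly connected tournament on n vertices with color number exactly n(n−1)/2 − n + 2 that contains no rainbow triangle. (Explicitly: with vertices v_1, …, v_n and arc set ({v_iv_j : 1 ≤ i < j ≤ n} \ {v_1v_n}) ∪ {v_nv_1}, color all arcs incident to v_1 with one common color and all remaining arcs with pairwise distinct new colors.) -/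
def myA (n : ℕ) : Finset (Fin n × Fin n) :=
  Finset.univ.filter (fun p =>
    (p.1.val < p.2.val ∧ ¬(p.1.val = 0 ∧ p.2.val = n - 1)) ∨ (p.1.val = n - 1 ∧ p.2.val = 0))

def myC (n : ℕ) (p : Fin n × Fin n) : ℕ :=
  if p.1.val = 0 ∨ p.2.val = 0 then 0 else p.1.val * n + p.2.val

lemma memA {n : ℕ} {p : Fin n × Fin n} :
    p ∈ myA n ↔
      (p.1.val < p.2.val ∧ ¬(p.1.val = 0 ∧ p.2.val = n - 1)) ∨
        (p.1.val = n - 1 ∧ p.2.val = 0) := by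
  simp [myA]

lemma memA2 {n : ℕ} {a b : Fin n} :
    (a, b) ∈ myA n ↔
      (a.val < b.val ∧ ¬(a.val = 0 ∧ b.val = n - 1)) ∨ (a.val = n - 1 ∧ b.val = 0) := by
  simp [myA]

lemma myScard (n : ℕ) (hn : 3 ≤ n) :
    2 * ((Finset.univ : Finset (Fin n × Fin n)).filter
        (fun p => 0 < p.1.val ∧ p.1.val < p.2.val)).card = (n - 1) * (n - 2) := by
  have h1 : ((Finset.univ : Finset (Fin n × Fin n)).filter
      (fun p => 0 < p.1.val ∧ p.1.val < p.2.val)).card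
      = ∑ b : Fin n,
          ((Finset.univ : Finset (Fin n)).filter (fun a => 0 < a.val ∧ a.val < b.val)).card := by
    rw [Finset.card_filter, Fintype.sum_prod_type_right]
    exact Finset.sum_congr rfl fun b _ => (Finset.card_filter _ _).symm
  have h2 : ∀ b : Fin n,
      ((Finset.univ : Finset (Fin n)).filter (fun a => 0 < a.val ∧ a.val < b.val)).card
        = b.val - 1 := by
    intro b
    have e2 : ((Finset.univ : Finset (Fin n)).filter (fun a => 0 < a.val ∧ a.val < b.val))
        = Finset.Ioo (⟨0, by omega⟩ : Fin n) b := by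
      ext a
      simp only [Finset.mem_filter, Finset.mem_univ, true_and, Finset.mem_Ioo]
      rw [Fin.lt_def, Fin.lt_def]
    rw [e2, Fin.card_Ioo]
    rfl
  have h3 : ((Finset.univ : Finset (Fin n × Fin n)).filter
      (fun p => 0 < p.1.val ∧ p.1.val < p.2.val)).card = ∑ b : Fin n, (b.val - 1) := by
    rw [h1]; exact Finset.sum_congr rfl (fun b _ => h2 b)
  rw [h3]
  have h4 : (∑ b : Fin n, (b.val - 1)) = ∑ i ∈ Finset.range n, (i - 1) :=
    Fin.sum_univ_eq_sum_range (fun i => i - 1) n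
  obtain ⟨m, rfl⟩ : ∃ m, n = m + 1 := ⟨n - 1, by omega⟩
  rw [h4, Finset.sum_range_succ']
  simp only [Nat.add_sub_cancel, Nat.zero_sub, Nat.add_zero]
  have em2 : m + 1 - 2 = m - 1 := by omega
  rw [em2]
  have := Finset.sum_range_id_mul_two m
  omega

/-- For every `n ≥ 3` there is an arc-colored strongly connected tournament
on `n` vertices with color number exactly `n(n-1)/2 - n + 2` and no rainbow triangle. -/
theorem stmt_13 (n : ℕ) (hn : 3 ≤ n) :
    ∃ (A : Finset (Fin n × Fin n)) (C : Fin n × Fin n → ℕ),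
      (∀ v : Fin n, (v, v) ∉ A) ∧
      (∀ u v : Fin n, u ≠ v → ((u, v) ∈ A ↔ (v, u) ∉ A)) ∧
      (∀ x y : Fin n, x ≠ y →
        Relation.TransGen (fun u v : Fin n => (u, v) ∈ A) x y) ∧
      colorNum A C = n * (n - 1) / 2 - n + 2 ∧
      ¬ hasRainbowTriangle A C := by
  refine ⟨myA n, myC n, ?_, ?_, ?_, ?_, ?_⟩
  · intro v h
    rw [memA2] at h
    omega
  · intro u v huv
    have h : u.val ≠ v.val := fun h => huv (Fin.ext h)
    have hu := u.isLt; have hv := v.isLt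
    rw [memA2, memA2]
    omega
  · intro x y hxy
    have h : x.val ≠ y.val := fun h => hxy (Fin.ext h)
    have hx := x.isLt; have hy := y.isLt
    obtain ⟨z, hz⟩ : ∃ a : Fin n, a.val = 0 := ⟨⟨0, by omega⟩, rfl⟩
    obtain ⟨o, ho⟩ : ∃ a : Fin n, a.val = 1 := ⟨⟨1, by omega⟩, rfl⟩
    obtain ⟨m, hm⟩ : ∃ a : Fin n, a.val = n - 1 := ⟨⟨n - 1, by omega⟩, rfl⟩
    by_cases h1 : x.val < y.val
    · by_cases h2 : x.val = 0 ∧ y.val = n - 1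
      · have a1 : (x, o) ∈ myA n := memA2.mpr (by omega)
        have a2 : (o, y) ∈ myA n := memA2.mpr (by omega)
        exact (Relation.TransGen.single a1).tail a2
      · exact Relation.TransGen.single (memA2.mpr (by omega))
    · have h1' : y.val < x.val := by omega
      by_cases hx0 : x.val = n - 1
      · by_cases hy0 : y.val = 0
        · exact Relation.TransGen.single (memA2.mpr (by omega))
        · have a1 : (x, z) ∈ myA n := memA2.mpr (by omega)
          have a2 : (z, y) ∈ myA n := memA2.mpr (by omega)
          exact (Relation.TransGen.single a1).tail a2
      · by_cases hy0 : y.val = 0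
        · have a1 : (x, m) ∈ myA n := memA2.mpr (by omega)
          have a2 : (m, y) ∈ myA n := memA2.mpr (by omega)
          exact (Relation.TransGen.single a1).tail a2
        · have a1 : (x, m) ∈ myA n := memA2.mpr (by omega)
          have a2 : (m, z) ∈ myA n := memA2.mpr (by omega)
          have a3 : (z, y) ∈ myA n := memA2.mpr (by omega)
          exact ((Relation.TransGen.single a1).tail a2).tail a3
  · -- color count
    set S : Finset (Fin n × Fin n) :=
      (Finset.univ : Finset (Fin n × Fin n)).filter
        (fun p => 0 < p.1.val ∧ p.1.val < p.2.val) with hS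
    have memS : ∀ p : Fin n × Fin n, p ∈ S ↔ 0 < p.1.val ∧ p.1.val < p.2.val := by
      intro p; simp [hS]
    have himg : (myA n).image (myC n) = insert 0 (S.image (myC n)) := by
      ext c
      simp only [Finset.mem_image, Finset.mem_insert]
      constructor
      · rintro ⟨p, hp, rfl⟩
        rw [memA] at hp
        by_cases h0 : p.1.val = 0 ∨ p.2.val = 0
        · left; simp [myC, h0]
        · right
          exact ⟨p, (memS p).mpr (by omega), rfl⟩
      · rintro (rfl | ⟨p, hp, rfl⟩)
        · obtain ⟨z, hz⟩ : ∃ a : Fin n, a.val = 0 := ⟨⟨0, by omega⟩, rfl⟩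
          obtain ⟨m, hm⟩ : ∃ a : Fin n, a.val = n - 1 := ⟨⟨n - 1, by omega⟩, rfl⟩
          refine ⟨(m, z), memA2.mpr (by omega), ?_⟩
          simp [myC, hz]
        · rw [memS] at hp
          have hlt := p.2.isLt
          exact ⟨p, memA.mpr (by omega), rfl⟩
    have h0notin : (0 : ℕ) ∉ S.image (myC n) := by
      intro h
      obtain ⟨p, hp, hc⟩ := Finset.mem_image.mp h
      rw [memS] at hp
      have hC : myC n p = p.1.val * n + p.2.val := by
        rw [myC, if_neg (by omega)]
      have hmul : 1 * n ≤ p.1.val * n := Nat.mul_le_mul_right n (by omega)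
      omega
    have hinj : Set.InjOn (myC n) S := by
      intro p hp q hq hpq
      rw [Finset.mem_coe, memS] at hp hq
      have hCp : myC n p = p.1.val * n + p.2.val := by rw [myC, if_neg (by omega)]
      have hCq : myC n q = q.1.val * n + q.2.val := by rw [myC, if_neg (by omega)]
      rw [hCp, hCq] at hpq
      have hp2 := p.2.isLt; have hq2 := q.2.isLt
      have h2 : p.2.val = q.2.val := by
        have := congrArg (· % n) hpq
        simpa [Nat.mul_add_mod, Nat.add_mul_mod_self_left, Nat.mul_mod_left,
          Nat.mod_eq_of_lt hp2, Nat.mod_eq_of_lt hq2, Nat.mul_comm] using this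
      have h1 : p.1.val = q.1.val := by
        have hmul : p.1.val * n = q.1.val * n := by omega
        exact Nat.eq_of_mul_eq_mul_right (by omega) hmul
      exact Prod.ext (Fin.ext h1) (Fin.ext h2)
    have hcard := myScard n hn
    rw [← hS] at hcard
    have hcn : colorNum (myA n) (myC n) = S.card + 1 := by
      rw [colorNum, himg, Finset.card_insert_of_notMem h0notin,
        Finset.card_image_of_injOn hinj]
    rw [hcn]
    obtain ⟨k, rfl⟩ : ∃ k, n = k + 3 := ⟨n - 3, by omega⟩
    have s1 : k + 3 - 1 = k + 2 := by omega
    have s2 : k + 3 - 2 = k + 1 := by omega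
    rw [s1, s2] at hcard
    rw [s1]
    have e2 : (k + 3) * (k + 2) = (k + 2) * (k + 1) + 2 * (k + 2) := by ring
    have e3 : 2 * 1 ≤ (k + 2) * (k + 1) :=
      Nat.mul_le_mul (by omega) (by omega)
    generalize hP : (k + 2) * (k + 1) = P at hcard e2 e3
    generalize hQ : (k + 3) * (k + 2) = Q at e2 ⊢
    omega
  · rintro ⟨u, v, w, h1, h2, h3, d1, d2, d3⟩
    rw [memA2] at h1 h2 h3
    rcases h1 with h1' | ⟨hu, hv⟩
    · rcases h2 with h2' | ⟨hv', hw⟩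
      · rcases h3 with h3' | ⟨hw', hu'⟩
        · omega
        · exact d3 (by simp [myC, hu'])
      · exact d2 (by simp [myC, hw])
    · exact d1 (by simp [myC, hv])
end

section
/- Let D be an arc-colored digraph of order n ≥ 4 that contains no rainbow triangle, and let v be a vertex of D such that the induced subdigraph D − v is a complete digraph of order n − 1. If d^s(v) ≥ 3, then CN⁻(v) ∩ C^s(v) = ∅ or CN⁺(v) ∩ C^s(v) = ∅. -/
/-- The set of colors saturated by the vertex `v`: colors `k` appearing on some arc such
that every arc colored `k` is incident to `v`. -/
def satColors {n : ℕ} (A : Finset (Fin n × Fin n)) (C : Fin n × Fin n → ℕ)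
    (v : Fin n) : Finset ℕ :=
  (A.image C).filter (fun k => ∀ p ∈ A, C p = k → p.1 = v ∨ p.2 = v)

/-- The set of colors appearing on in-arcs of `v`. -/
def inColors {n : ℕ} (A : Finset (Fin n × Fin n)) (C : Fin n × Fin n → ℕ)
    (v : Fin n) : Finset ℕ :=
  (A.filter (fun p => p.2 = v)).image C

/-- The set of colors appearing on out-arcs of `v`. -/
def outColors {n : ℕ} (A : Finset (Fin n × Fin n)) (C : Fin n × Fin n → ℕ)
    (v : Fin n) : Finset ℕ :=
  (A.filter (fun p => p.1 = v)).image C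

/-- If an arc-colored digraph of order `n ≥ 4` has no rainbow triangle and a
vertex `v` with `D - v` complete and `dˢ(v) ≥ 3`, then `CN⁻(v) ∩ Cˢ(v) = ∅` or
`CN⁺(v) ∩ Cˢ(v) = ∅`. -/
theorem stmt_14 (n : ℕ) (hn : 4 ≤ n) (A : Finset (Fin n × Fin n))
    (hA : ∀ p ∈ A, p.1 ≠ p.2) (C : Fin n × Fin n → ℕ)
    (hnr : ¬ hasRainbowTriangle A C) (v : Fin n)
    (hcomp : ∀ u w : Fin n, u ≠ v → w ≠ v → u ≠ w → (u, w) ∈ A)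
    (hs : 3 ≤ (satColors A C v).card) :
    Disjoint (inColors A C v) (satColors A C v) ∨
    Disjoint (outColors A C v) (satColors A C v) := by
  by_contra hcon
  push_neg at hcon
  obtain ⟨hndi, hndo⟩ := hcon
  obtain ⟨a, hain, hasat⟩ := Finset.not_disjoint_iff.mp hndi
  obtain ⟨b, hbout, hbsat⟩ := Finset.not_disjoint_iff.mp hndo
  have hunsat : ∀ p ∈ A, p.1 ≠ v → p.2 ≠ v → ∀ k ∈ satColors A C v, C p ≠ k := by
    intro p hp h1 h2 k hk hck
    simp only [satColors, Finset.mem_filter] at hk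
    rcases hk.2 p hp hck with h | h
    · exact h1 h
    · exact h2 h
  have hsatinc : ∀ k ∈ satColors A C v, ∀ p ∈ A, C p = k → p.1 = v ∨ p.2 = v := by
    intro k hk
    simp only [satColors, Finset.mem_filter] at hk
    exact hk.2
  have hsatarc : ∀ k ∈ satColors A C v, ∃ p ∈ A, C p = k := by
    intro k hk
    simp only [satColors, Finset.mem_filter, Finset.mem_image] at hk
    exact hk.1
  have htri : ∀ u w z : Fin n, (u, w) ∈ A → (w, z) ∈ A → (z, u) ∈ A →
      C (u, w) = C (w, z) ∨ C (w, z) = C (z, u) ∨ C (z, u) = C (u, w) := by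
    intro u w z h1 h2 h3
    by_contra h
    push_neg at h
    exact hnr ⟨u, w, z, h1, h2, h3, h.1, h.2.1, h.2.2⟩
  -- extract an in-arc of color a and an out-arc of color b
  obtain ⟨x, hxv, hxA, hxC⟩ : ∃ x, x ≠ v ∧ (x, v) ∈ A ∧ C (x, v) = a := by
    simp only [inColors, Finset.mem_image, Finset.mem_filter] at hain
    obtain ⟨p, ⟨hpA, hp2⟩, hpc⟩ := hain
    refine ⟨p.1, ?_, ?_, ?_⟩
    · have := hA p hpA; rwa [hp2] at this
    · rw [← hp2, Prod.mk.eta]; exact hpA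
    · rw [← hp2, Prod.mk.eta]; exact hpc
  obtain ⟨y, hyv, hyA, hyC⟩ : ∃ y, y ≠ v ∧ (v, y) ∈ A ∧ C (v, y) = b := by
    simp only [outColors, Finset.mem_image, Finset.mem_filter] at hbout
    obtain ⟨p, ⟨hpA, hp1⟩, hpc⟩ := hbout
    refine ⟨p.2, ?_, ?_, ?_⟩
    · have := hA p hpA; rw [hp1] at this; exact this.symm
    · rw [← hp1, Prod.mk.eta]; exact hpA
    · rw [← hp1, Prod.mk.eta]; exact hpc
  have h2card : 1 < ((satColors A C v).erase a).card := by
    rw [Finset.card_erase_of_mem hasat]; omega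
  obtain ⟨c0, hc0, d0, hd0, hcd0⟩ := Finset.one_lt_card.mp h2card
  obtain ⟨hc0a, hc0s⟩ := Finset.mem_erase.mp hc0
  obtain ⟨hd0a, hd0s⟩ := Finset.mem_erase.mp hd0
  by_cases hxy : x = y
  · -- x = y : arcs (x,v) of color a and (v,x) of color b
    subst hxy
    obtain ⟨c, hcs, hca, hcb⟩ : ∃ c ∈ satColors A C v, c ≠ a ∧ c ≠ b := by
      by_cases h : c0 = b
      · exact ⟨d0, hd0s, hd0a, by rw [h] at hcd0; exact hcd0.symm⟩
      · exact ⟨c0, hc0s, hc0a, h⟩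
    obtain ⟨p, hpA, hpC⟩ := hsatarc c hcs
    obtain ⟨p1, p2⟩ := p
    have hp12 : p1 ≠ p2 := hA _ hpA
    rcases hsatinc c hcs _ hpA hpC with h1 | h2
    · -- p = (v, p2)
      have h1' : p1 = v := h1
      rw [h1'] at hpA hpC hp12
      have hp2v : p2 ≠ v := hp12.symm
      by_cases hp2x : p2 = x
      · rw [hp2x] at hpC
        rw [hpC] at hyC
        exact hcb hyC
      · have hax : (p2, x) ∈ A := hcomp p2 x hp2v hxv hp2x
        have hu : C (p2, x) ∉ satColors A C v :=
          fun h => hunsat (p2, x) hax hp2v hxv _ h rfl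
        rcases htri x v p2 hxA hpA hax with h | h | h
        · rw [hxC, hpC] at h; exact hca h.symm
        · rw [hpC] at h; exact hu (by rw [← h]; exact hcs)
        · rw [hxC] at h; exact hu (by rw [h]; exact hasat)
    · -- p = (p1, v)
      have h2' : p2 = v := h2
      rw [h2'] at hpA hpC hp12
      have hp1v : p1 ≠ v := hp12
      by_cases hp1x : p1 = x
      · rw [hp1x] at hpC
        rw [hpC] at hxC
        exact hca hxC
      · have hax : (x, p1) ∈ A := hcomp x p1 hxv hp1v (fun h => hp1x h.symm)
        have hu : C (x, p1) ∉ satColors A C v :=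
          fun h => hunsat (x, p1) hax hxv hp1v _ h rfl
        rcases htri p1 v x hpA hyA hax with h | h | h
        · rw [hpC, hyC] at h; exact hcb h
        · rw [hyC] at h; exact hu (by rw [← h]; exact hbsat)
        · rw [hpC] at h; exact hu (by rw [h]; exact hcs)
  · -- x ≠ y : first show a = b
    have hyxA : (y, x) ∈ A := hcomp y x hyv hxv (fun h => hxy h.symm)
    have huyx : C (y, x) ∉ satColors A C v :=
      fun h => hunsat (y, x) hyxA hyv hxv _ h rfl
    have hab : a = b := by
      rcases htri x v y hxA hyA hyxA with h | h | h
      · rw [hxC, hyC] at h; exact h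
      · rw [hyC] at h; exact absurd (by rw [← h]; exact hbsat : C (y, x) ∈ satColors A C v) huyx
      · rw [hxC] at h; exact absurd (by rw [h]; exact hasat : C (y, x) ∈ satColors A C v) huyx
    rw [← hab] at hyC
    -- any arc of a saturated color ≠ a is (y,v) or (v,x)
    have hloc : ∀ k ∈ satColors A C v, k ≠ a → ∀ p ∈ A, C p = k →
        p = (y, v) ∨ p = (v, x) := by
      intro k hk hka p hpA hpC
      obtain ⟨p1, p2⟩ := p
      have hp12 : p1 ≠ p2 := hA _ hpA
      rcases hsatinc k hk _ hpA hpC with h1 | h2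
      · have h1' : p1 = v := h1
        rw [h1'] at hpA hpC hp12
        have hp2v : p2 ≠ v := hp12.symm
        by_cases hp2x : p2 = x
        · exact Or.inr (by rw [h1', hp2x])
        · exfalso
          have hax : (p2, x) ∈ A := hcomp p2 x hp2v hxv hp2x
          have hu : C (p2, x) ∉ satColors A C v :=
            fun h => hunsat (p2, x) hax hp2v hxv _ h rfl
          rcases htri x v p2 hxA hpA hax with h | h | h
          · rw [hxC, hpC] at h; exact hka h.symm
          · rw [hpC] at h; exact hu (by rw [← h]; exact hk)
          · rw [hxC] at h; exact hu (by rw [h]; exact hasat)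
      · have h2' : p2 = v := h2
        rw [h2'] at hpA hpC hp12
        have hp1v : p1 ≠ v := hp12
        by_cases hp1y : p1 = y
        · exact Or.inl (by rw [h2', hp1y])
        · exfalso
          have hax : (y, p1) ∈ A := hcomp y p1 hyv hp1v (fun h => hp1y h.symm)
          have hu : C (y, p1) ∉ satColors A C v :=
            fun h => hunsat (y, p1) hax hyv hp1v _ h rfl
          rcases htri p1 v y hpA hyA hax with h | h | h
          · rw [hpC, hyC] at h; exact hka h
          · rw [hyC] at h; exact hu (by rw [← h]; exact hasat)
          · rw [hpC] at h; exact hu (by rw [h]; exact hk)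
    obtain ⟨pc, hpcA, hpcC⟩ := hsatarc c0 hc0s
    obtain ⟨pd, hpdA, hpdC⟩ := hsatarc d0 hd0s
    have hxyA : (x, y) ∈ A := hcomp x y hxv hyv hxy
    have huxy : C (x, y) ∉ satColors A C v :=
      fun h => hunsat (x, y) hxyA hxv hyv _ h rfl
    have hfin : ∀ k₁ k₂ : ℕ, k₁ ∈ satColors A C v → k₂ ∈ satColors A C v →
        k₁ ≠ k₂ → C (y, v) = k₁ → C (v, x) = k₂ → (y, v) ∈ A → (v, x) ∈ A → False := by
      intro k₁ k₂ hk1 hk2 hk12 hC1 hC2 hA1 hA2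
      rcases htri y v x hA1 hA2 hxyA with h | h | h
      · rw [hC1, hC2] at h; exact hk12 h
      · rw [hC2] at h; exact huxy (by rw [← h]; exact hk2)
      · rw [hC1] at h; exact huxy (by rw [h]; exact hk1)
    rcases hloc c0 hc0s hc0a pc hpcA hpcC with rfl | rfl <;>
      rcases hloc d0 hd0s hd0a pd hpdA hpdC with rfl | rfl
    · exact hcd0 (hpcC.symm.trans hpdC)
    · exact hfin c0 d0 hc0s hd0s hcd0 hpcC hpdC hpcA hpdA
    · exact hfin d0 c0 hd0s hc0s hcd0.symm hpdC hpcC hpdA hpcA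
    · exact hcd0 (hpcC.symm.trans hpdC)
end

section
/- Let D be an arc-colored complete digraph of order 4 that contains no rainbow triangle. If some vertex v of D satisfies d^s(v) ≥ 3, then c(D) ≤ 5. -/
/-! ### Auxiliary machinery -/

/-- Color `s` is saturated by `v`. -/
def Sat (C : Fin 4 × Fin 4 → ℕ) (v : Fin 4) (s : ℕ) : Prop :=
  ∀ p ∈ completeArcs 4, C p = s → p.1 = v ∨ p.2 = v

lemma arcs_mem {x y : Fin 4} (h : x ≠ y) : (x, y) ∈ completeArcs 4 := by
  simp [completeArcs, h]

lemma card_le_five (p q r s t : ℕ) : ({p, q, r, s, t} : Finset ℕ).card ≤ 5 := by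
  simpa using List.toFinset_card_le [p, q, r, s, t]

lemma cover : ∀ v a b c w : Fin 4, a ≠ v → b ≠ v → c ≠ v → a ≠ b → a ≠ c → b ≠ c →
    (w = v ∨ w = a ∨ w = b ∨ w = c) := by decide

lemma tri (C : Fin 4 × Fin 4 → ℕ) (hnr : ¬ hasRainbowTriangle (completeArcs 4) C)
    {u w x : Fin 4} (h1 : u ≠ w) (h2 : w ≠ x) (h3 : x ≠ u) :
    C (u, w) = C (w, x) ∨ C (w, x) = C (x, u) ∨ C (x, u) = C (u, w) := by
  by_contra h
  push_neg at h
  exact hnr ⟨u, w, x, arcs_mem h1, arcs_mem h2, arcs_mem h3, h.1, h.2.1, h.2.2⟩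

/-- A saturated color cannot appear on an arc avoiding `v`. -/
lemma sat_not_on {C : Fin 4 × Fin 4 → ℕ} {v : Fin 4} {s : ℕ} (hS : Sat C v s)
    {z w : Fin 4} (hz : z ≠ v) (hw : w ≠ v) (hzw : z ≠ w) : C (z, w) ≠ s := by
  intro h
  rcases hS (z, w) (arcs_mem hzw) h with h' | h'
  · exact hz h'
  · exact hw h'

/-- If `C(v,x)` and `C(y,v)` are both saturated and `x ≠ y`, they are equal. -/
lemma satK (C : Fin 4 × Fin 4 → ℕ) (hnr : ¬ hasRainbowTriangle (completeArcs 4) C)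
    {v x y : Fin 4} (hx : x ≠ v) (hy : y ≠ v) (hxy : x ≠ y)
    (Sx : Sat C v (C (v, x))) (Sy : Sat C v (C (y, v))) : C (v, x) = C (y, v) := by
  rcases tri C hnr (Ne.symm hx) hxy hy with h | h | h
  · exact absurd h.symm (sat_not_on Sx hx hy hxy)
  · exact absurd h (sat_not_on Sy hx hy hxy)
  · exact h.symm

/-- The out-case: the three saturated colors are the colors of the out-arcs of `v`. -/
lemma caseOuts (C : Fin 4 × Fin 4 → ℕ) (hnr : ¬ hasRainbowTriangle (completeArcs 4) C)
    (v a b c : Fin 4)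
    (hav : a ≠ v) (hbv : b ≠ v) (hcv : c ≠ v) (hab : a ≠ b) (hac : a ≠ c) (hbc : b ≠ c)
    (Sa : Sat C v (C (v, a))) (Sb : Sat C v (C (v, b))) (Sc : Sat C v (C (v, c)))
    (dab : C (v, a) ≠ C (v, b)) (dac : C (v, a) ≠ C (v, c)) (dbc : C (v, b) ≠ C (v, c)) :
    colorNum (completeArcs 4) C ≤ 5 := by
  have hcov : ∀ w : Fin 4, w = v ∨ w = a ∨ w = b ∨ w = c :=
    fun w => cover v a b c w hav hbv hcv hab hac hbc
  have key : ∀ x y x' : Fin 4, x ≠ v → y ≠ v → x' ≠ v → x ≠ y → x' ≠ y → x ≠ x' →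
      Sat C v (C (v, x)) → Sat C v (C (v, x')) → C (v, x) ≠ C (v, x') →
      C (x, y) = C (y, v) := by
    intro x y x' hx hy hx' hxy hx'y hxx' Sx Sx' hne
    rcases tri C hnr (Ne.symm hx) hxy hy with h | h | h
    · exact absurd h.symm (sat_not_on Sx hx hy hxy)
    · exact h
    · rcases tri C hnr (Ne.symm hx') hx'y hy with h2 | h2 | h2
      · exact absurd h2.symm (sat_not_on Sx' hx' hy hx'y)
      · exact absurd (h2.trans h) (sat_not_on Sx hx' hy hx'y)
      · exact absurd (h.symm.trans h2) hne
  have kab : C (a, b) = C (b, v) := key a b c hav hbv hcv hab hbc.symm hac Sa Sc dac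
  have kcb : C (c, b) = C (b, v) := key c b a hcv hbv hav hbc.symm hab hac.symm Sc Sa dac.symm
  have kba : C (b, a) = C (a, v) := key b a c hbv hav hcv hab.symm hac.symm hbc Sb Sc dbc
  have kca : C (c, a) = C (a, v) := key c a b hcv hav hbv hac.symm hab.symm hbc.symm Sc Sb dbc.symm
  have kac : C (a, c) = C (c, v) := key a c b hav hcv hbv hac hbc hab Sa Sb dab
  have kbc : C (b, c) = C (c, v) := key b c a hbv hcv hav hbc hac hab.symm Sb Sa dab.symm
  have vals : ∀ p ∈ completeArcs 4, C p = C (v, a) ∨ C p = C (v, b) ∨ C p = C (v, c) ∨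
      C p = C (a, v) ∨ C p = C (b, v) ∨ C p = C (c, v) := by
    rintro ⟨x, y⟩ hp
    have hxy : x ≠ y := by simpa [completeArcs] using hp
    rcases hcov x with rfl | rfl | rfl | rfl <;> rcases hcov y with rfl | rfl | rfl | rfl <;>
      first
      | exact absurd rfl hxy
      | tauto
  have main5 : ∀ d e f g h : ℕ,
      (∀ p ∈ completeArcs 4, C p = d ∨ C p = e ∨ C p = f ∨ C p = g ∨ C p = h) →
      colorNum (completeArcs 4) C ≤ 5 := by
    intro d e f g h hvals
    have hsub : (completeArcs 4).image C ⊆ {d, e, f, g, h} := by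
      intro s hsm
      rw [Finset.mem_image] at hsm
      obtain ⟨p, hp, rfl⟩ := hsm
      rcases hvals p hp with h' | h' | h' | h' | h' <;> simp [h', Finset.mem_insert]
    exact le_trans (Finset.card_le_card hsub) (card_le_five d e f g h)
  have htri := tri C hnr hab hbc hac.symm
  rw [kab, kbc, kca] at htri
  rcases htri with h | h | h
  · refine main5 (C (v, a)) (C (v, b)) (C (v, c)) (C (a, v)) (C (b, v)) ?_
    intro p hp
    rcases vals p hp with h' | h' | h' | h' | h' | h' <;> simp [h', ← h]
  · refine main5 (C (v, a)) (C (v, b)) (C (v, c)) (C (b, v)) (C (c, v)) ?_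
    intro p hp
    rcases vals p hp with h' | h' | h' | h' | h' | h' <;> simp [h', ← h]
  · refine main5 (C (v, a)) (C (v, b)) (C (v, c)) (C (a, v)) (C (c, v)) ?_
    intro p hp
    rcases vals p hp with h' | h' | h' | h' | h' | h' <;> simp [h', ← h]

/-- The in-case: the three saturated colors are the colors of the in-arcs of `v`. -/
lemma caseIns (C : Fin 4 × Fin 4 → ℕ) (hnr : ¬ hasRainbowTriangle (completeArcs 4) C)
    (v a b c : Fin 4)
    (hav : a ≠ v) (hbv : b ≠ v) (hcv : c ≠ v) (hab : a ≠ b) (hac : a ≠ c) (hbc : b ≠ c)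
    (Sa : Sat C v (C (a, v))) (Sb : Sat C v (C (b, v))) (Sc : Sat C v (C (c, v)))
    (dab : C (a, v) ≠ C (b, v)) (dac : C (a, v) ≠ C (c, v)) (dbc : C (b, v) ≠ C (c, v)) :
    colorNum (completeArcs 4) C ≤ 5 := by
  have hcov : ∀ w : Fin 4, w = v ∨ w = a ∨ w = b ∨ w = c :=
    fun w => cover v a b c w hav hbv hcv hab hac hbc
  have key : ∀ x y y' : Fin 4, x ≠ v → y ≠ v → y' ≠ v → x ≠ y → x ≠ y' → y ≠ y' →
      Sat C v (C (y, v)) → Sat C v (C (y', v)) → C (y, v) ≠ C (y', v) →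
      C (x, y) = C (v, x) := by
    intro x y y' hx hy hy' hxy hxy' hyy' Sy Sy' hne
    rcases tri C hnr (Ne.symm hx) hxy hy with h | h | h
    · exact h.symm
    · exact absurd h (sat_not_on Sy hx hy hxy)
    · rcases tri C hnr (Ne.symm hx) hxy' hy' with h2 | h2 | h2
      · exact absurd (h2.symm.trans h.symm) (sat_not_on Sy hx hy' hxy')
      · exact absurd h2 (sat_not_on Sy' hx hy' hxy')
      · exact absurd (h.trans h2.symm) hne
  have kab : C (a, b) = C (v, a) := key a b c hav hbv hcv hab hac hbc Sb Sc dbc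
  have kac : C (a, c) = C (v, a) := key a c b hav hcv hbv hac hab hbc.symm Sc Sb dbc.symm
  have kba : C (b, a) = C (v, b) := key b a c hbv hav hcv hab.symm hbc hac Sa Sc dac
  have kbc : C (b, c) = C (v, b) := key b c a hbv hcv hav hbc hab.symm hac.symm Sc Sa dac.symm
  have kca : C (c, a) = C (v, c) := key c a b hcv hav hbv hac.symm hbc.symm hab Sa Sb dab
  have kcb : C (c, b) = C (v, c) := key c b a hcv hbv hav hbc.symm hac.symm hab.symm Sb Sa dab.symm
  have vals : ∀ p ∈ completeArcs 4, C p = C (a, v) ∨ C p = C (b, v) ∨ C p = C (c, v) ∨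
      C p = C (v, a) ∨ C p = C (v, b) ∨ C p = C (v, c) := by
    rintro ⟨x, y⟩ hp
    have hxy : x ≠ y := by simpa [completeArcs] using hp
    rcases hcov x with rfl | rfl | rfl | rfl <;> rcases hcov y with rfl | rfl | rfl | rfl <;>
      first
      | exact absurd rfl hxy
      | tauto
  have main5 : ∀ d e f g h : ℕ,
      (∀ p ∈ completeArcs 4, C p = d ∨ C p = e ∨ C p = f ∨ C p = g ∨ C p = h) →
      colorNum (completeArcs 4) C ≤ 5 := by
    intro d e f g h hvals
    have hsub : (completeArcs 4).image C ⊆ {d, e, f, g, h} := by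
      intro s hsm
      rw [Finset.mem_image] at hsm
      obtain ⟨p, hp, rfl⟩ := hsm
      rcases hvals p hp with h' | h' | h' | h' | h' <;> simp [h', Finset.mem_insert]
    exact le_trans (Finset.card_le_card hsub) (card_le_five d e f g h)
  have htri := tri C hnr hab hbc hac.symm
  rw [kab, kbc, kca] at htri
  rcases htri with h | h | h
  · refine main5 (C (a, v)) (C (b, v)) (C (c, v)) (C (v, a)) (C (v, c)) ?_
    intro p hp
    rcases vals p hp with h' | h' | h' | h' | h' | h' <;> simp [h', ← h]
  · refine main5 (C (a, v)) (C (b, v)) (C (c, v)) (C (v, a)) (C (v, b)) ?_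
    intro p hp
    rcases vals p hp with h' | h' | h' | h' | h' | h' <;> simp [h', ← h]
  · refine main5 (C (a, v)) (C (b, v)) (C (c, v)) (C (v, b)) (C (v, c)) ?_
    intro p hp
    rcases vals p hp with h' | h' | h' | h' | h' | h' <;> simp [h', ← h]

/-- Mixed placement (two outs, one in) of three distinct saturated colors is impossible. -/
lemma mixedOOI (C : Fin 4 × Fin 4 → ℕ) (hnr : ¬ hasRainbowTriangle (completeArcs 4) C)
    {v x y z : Fin 4} (hx : x ≠ v) (hy : y ≠ v) (hz : z ≠ v)
    (Sx : Sat C v (C (v, x))) (Sy : Sat C v (C (y, v))) (Sz : Sat C v (C (v, z)))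
    (d1 : C (v, x) ≠ C (y, v)) (d2 : C (v, x) ≠ C (v, z)) (d3 : C (y, v) ≠ C (v, z)) :
    False := by
  by_cases hxy : x = y
  · subst hxy
    by_cases hzx : z = x
    · subst hzx; exact d2 rfl
    · exact d3 (satK C hnr hz hx hzx Sz Sy).symm
  · exact d1 (satK C hnr hx hy hxy Sx Sy)

/-- Mixed placement (two ins, one out) of three distinct saturated colors is impossible. -/
lemma mixedIIO (C : Fin 4 × Fin 4 → ℕ) (hnr : ¬ hasRainbowTriangle (completeArcs 4) C)
    {v x y z : Fin 4} (hx : x ≠ v) (hy : y ≠ v) (hz : z ≠ v)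
    (Sx : Sat C v (C (x, v))) (Sy : Sat C v (C (v, y))) (Sz : Sat C v (C (z, v)))
    (d1 : C (x, v) ≠ C (v, y)) (d2 : C (x, v) ≠ C (z, v)) (d3 : C (v, y) ≠ C (z, v)) :
    False := by
  by_cases hyx : y = x
  · subst hyx
    by_cases hzy : z = y
    · subst hzy; exact d2 rfl
    · exact d3 (satK C hnr hy hz (Ne.symm hzy) Sy Sz)
  · exact d1 (satK C hnr hy hx hyx Sy Sx).symm

/-- If an arc-colored complete digraph of order 4 has no rainbow triangle and
some vertex `v` with `dˢ(v) ≥ 3`, then `c(D) ≤ 5`. -/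
theorem stmt_15 (C : Fin 4 × Fin 4 → ℕ)
    (hnr : ¬ hasRainbowTriangle (completeArcs 4) C)
    (v : Fin 4) (hs : 3 ≤ (satColors (completeArcs 4) C v).card) :
    colorNum (completeArcs 4) C ≤ 5 := by
  obtain ⟨s1, s2, s3, h1, h2, h3, d12, d13, d23⟩ :=
    Finset.two_lt_card_iff.mp (lt_of_lt_of_le (by norm_num) hs)
  have loc : ∀ s ∈ satColors (completeArcs 4) C v,
      Sat C v s ∧ ∃ x, x ≠ v ∧ (s = C (v, x) ∨ s = C (x, v)) := by
    intro s hsm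
    rw [satColors, Finset.mem_filter] at hsm
    obtain ⟨himg, hsat⟩ := hsm
    refine ⟨hsat, ?_⟩
    rw [Finset.mem_image] at himg
    obtain ⟨p, hp, rfl⟩ := himg
    obtain ⟨x, y⟩ := p
    have hxy : x ≠ y := by simpa [completeArcs] using hp
    rcases hsat (x, y) hp rfl with h | h
    · simp only at h; subst h
      exact ⟨y, Ne.symm hxy, Or.inl rfl⟩
    · simp only at h; subst h
      exact ⟨x, hxy, Or.inr rfl⟩
  obtain ⟨S1, x1, hx1, e1⟩ := loc s1 h1
  obtain ⟨S2, x2, hx2, e2⟩ := loc s2 h2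
  obtain ⟨S3, x3, hx3, e3⟩ := loc s3 h3
  rcases e1 with e1 | e1 <;> rcases e2 with e2 | e2 <;> rcases e3 with e3 | e3 <;>
      subst e1 <;> subst e2 <;> subst e3
  · -- OOO
    have n12 : x1 ≠ x2 := fun h => d12 (h ▸ rfl)
    have n13 : x1 ≠ x3 := fun h => d13 (h ▸ rfl)
    have n23 : x2 ≠ x3 := fun h => d23 (h ▸ rfl)
    exact caseOuts C hnr v x1 x2 x3 hx1 hx2 hx3 n12 n13 n23 S1 S2 S3 d12 d13 d23
  · -- OOI
    exact absurd (mixedOOI C hnr hx1 hx3 hx2 S1 S3 S2 d13 d12 d23.symm) not_false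
  · -- OIO
    exact absurd (mixedOOI C hnr hx1 hx2 hx3 S1 S2 S3 d12 d13 d23) not_false
  · -- OII
    exact absurd (mixedIIO C hnr hx2 hx1 hx3 S2 S1 S3 d12.symm d23 d13) not_false
  · -- IOO
    exact absurd (mixedOOI C hnr hx2 hx1 hx3 S2 S1 S3 d12.symm d23 d13) not_false
  · -- IOI
    exact absurd (mixedIIO C hnr hx1 hx2 hx3 S1 S2 S3 d12 d13 d23) not_false
  · -- IIO
    exact absurd (mixedIIO C hnr hx1 hx3 hx2 S1 S3 S2 d13 d12 d23.symm) not_false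
  · -- III
    have n12 : x1 ≠ x2 := fun h => d12 (h ▸ rfl)
    have n13 : x1 ≠ x3 := fun h => d13 (h ▸ rfl)
    have n23 : x2 ≠ x3 := fun h => d23 (h ▸ rfl)
    exact caseIns C hnr v x1 x2 x3 hx1 hx2 hx3 n12 n13 n23 S1 S2 S3 d12 d13 d23
end

section
/- Let D be an arc-colored complete digraph of order n ≥ 4 that contains no rainbow triangle. Then there exists a vertex v of D with d^s(v) ≤ ⌊n/2⌋. -/
namespace Stmt16Aux

variable {n : ℕ}

lemma mem_A {p : Fin n × Fin n} : p ∈ completeArcs n ↔ p.1 ≠ p.2 := by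
  simp [completeArcs]

/-- `k` is a color saturated by `v`. -/
def Sat (C : Fin n × Fin n → ℕ) (v : Fin n) (k : ℕ) : Prop :=
  k ∈ satColors (completeArcs n) C v

lemma sat_def {C : Fin n × Fin n → ℕ} {v : Fin n} {k : ℕ} :
    Sat C v k ↔ (∃ p ∈ completeArcs n, C p = k) ∧
      ∀ p ∈ completeArcs n, C p = k → p.1 = v ∨ p.2 = v := by
  unfold Sat satColors
  simp only [Finset.mem_filter, Finset.mem_image]

lemma sat_incident {C : Fin n × Fin n → ℕ} {v : Fin n} {k : ℕ} (h : Sat C v k)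
    {p : Fin n × Fin n} (hp : p ∈ completeArcs n) (hc : C p = k) :
    p.1 = v ∨ p.2 = v :=
  (sat_def.mp h).2 p hp hc

/-- Every saturated color of `v` lives on an out-arc or an in-arc at `v`. -/
lemma sat_class {C : Fin n × Fin n → ℕ} {v : Fin n} {k : ℕ} (h : Sat C v k) :
    (∃ u, u ≠ v ∧ C (v, u) = k ∧ Sat C v (C (v, u))) ∨
    (∃ w, w ≠ v ∧ C (w, v) = k ∧ Sat C v (C (w, v))) := by
  obtain ⟨⟨p, hp, hpk⟩, hin⟩ := sat_def.mp h
  obtain ⟨a, b⟩ := p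
  have hab : a ≠ b := mem_A.mp hp
  rcases hin (a, b) hp hpk with h1 | h2
  · simp only at h1
    subst h1
    refine Or.inl ⟨b, Ne.symm hab, hpk, ?_⟩
    rw [hpk]; exact h
  · simp only at h2
    subst h2
    refine Or.inr ⟨a, hab, hpk, ?_⟩
    rw [hpk]; exact h

/-- Key triangle lemma: if `v` saturates the colors of out-arc `(v,u)` and in-arc `(w,v)`
with `u ≠ w`, those colors coincide. -/
lemma key {C : Fin n × Fin n → ℕ} (hnr : ¬ hasRainbowTriangle (completeArcs n) C)
    {v u w : Fin n} (huv : u ≠ v) (hwv : w ≠ v) (huw : u ≠ w)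
    (h1 : Sat C v (C (v, u))) (h2 : Sat C v (C (w, v))) : C (v, u) = C (w, v) := by
  by_contra hne
  have m1 : ((v, u) : Fin n × Fin n) ∈ completeArcs n := mem_A.mpr (Ne.symm huv)
  have m2 : ((u, w) : Fin n × Fin n) ∈ completeArcs n := mem_A.mpr huw
  have m3 : ((w, v) : Fin n × Fin n) ∈ completeArcs n := mem_A.mpr hwv
  refine hnr ⟨v, u, w, m1, m2, m3, ?_, ?_, fun he => hne he.symm⟩
  · intro he
    rcases sat_incident h1 m2 he.symm with h | h
    · exact huv h
    · exact hwv h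
  · intro he
    rcases sat_incident h2 m2 he with h | h
    · exact huv h
    · exact hwv h

lemma card_le_pair {S : Finset ℕ} {a b : ℕ} (h : S ⊆ {a, b}) : S.card ≤ 2 :=
  (Finset.card_le_card h).trans ((Finset.card_insert_le a {b}).trans (by simp))

/-- If `v` saturates the colors of an out-arc and an in-arc to distinct vertices,
then `v` saturates at most two colors. -/
lemma mixed_card {C : Fin n × Fin n → ℕ} (hnr : ¬ hasRainbowTriangle (completeArcs n) C)
    {v u w : Fin n} (huv : u ≠ v) (hwv : w ≠ v) (huw : u ≠ w)
    (hu : Sat C v (C (v, u))) (hw : Sat C v (C (w, v))) :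
    (satColors (completeArcs n) C v).card ≤ 2 := by
  have hk0 : C (v, u) = C (w, v) := key hnr huv hwv huw hu hw
  by_cases hb : Sat C v (C (v, w))
  · -- all sat colors are C(v,u) or C(v,w)
    apply card_le_pair (a := C (v, u)) (b := C (v, w))
    intro k hk
    have hk' : Sat C v k := hk
    simp only [Finset.mem_insert, Finset.mem_singleton]
    rcases sat_class hk' with ⟨u', h1, h2, h3⟩ | ⟨w', h1, h2, h3⟩
    · by_cases h : u' = w
      · subst h; exact Or.inr h2.symm
      · left
        rw [← h2, key hnr h1 hwv h h3 hw, ← hk0]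
    · by_cases h : w' = u
      · subst h
        -- k = C(u,v); since Sat of C(u,v) and Sat of C(v,w): key with (w ∈ out, u ∈ in)
        right
        rw [← h2, ← key hnr hwv h1 (Ne.symm huw) hb h3]
      · left
        rw [← h2, ← key hnr huv h1 (fun e => h e.symm) hu h3]
  · apply card_le_pair (a := C (v, u)) (b := C (u, v))
    intro k hk
    have hk' : Sat C v k := hk
    simp only [Finset.mem_insert, Finset.mem_singleton]
    rcases sat_class hk' with ⟨u', h1, h2, h3⟩ | ⟨w', h1, h2, h3⟩
    · by_cases h : u' = w
      · subst h; exact absurd h3 hb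
      · left
        rw [← h2, key hnr h1 hwv h h3 hw, ← hk0]
    · by_cases h : w' = u
      · subst h; exact Or.inr h2.symm
      · left
        rw [← h2, ← key hnr huv h1 (fun e => h e.symm) hu h3]

/-- Structure lemma at an out-pure vertex. -/
lemma out_struct {C : Fin n × Fin n → ℕ} (hnr : ¬ hasRainbowTriangle (completeArcs n) C)
    {v u x : Fin n} (hOut : ∀ w, w ≠ v → ¬ Sat C v (C (w, v)))
    (huv : u ≠ v) (hu : Sat C v (C (v, u))) (hxu : x ≠ u) (hxv : x ≠ v) :
    C (u, x) = C (x, v) := by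
  have m1 : ((v, u) : Fin n × Fin n) ∈ completeArcs n := mem_A.mpr (Ne.symm huv)
  have m2 : ((u, x) : Fin n × Fin n) ∈ completeArcs n := mem_A.mpr (Ne.symm hxu)
  have m3 : ((x, v) : Fin n × Fin n) ∈ completeArcs n := mem_A.mpr hxv
  by_contra hne
  refine hnr ⟨v, u, x, m1, m2, m3, ?_, hne, ?_⟩
  · intro he
    rcases sat_incident hu m2 he.symm with h | h
    · exact huv h
    · exact hxv h
  · intro he
    exact hOut x hxv (by rw [he]; exact hu)

/-- Structure lemma at an in-pure vertex. -/
lemma in_struct {C : Fin n × Fin n → ℕ} (hnr : ¬ hasRainbowTriangle (completeArcs n) C)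
    {x w y : Fin n} (hIn : ∀ u, u ≠ x → ¬ Sat C x (C (x, u)))
    (hwx : w ≠ x) (hw : Sat C x (C (w, x))) (hyw : y ≠ w) (hyx : y ≠ x) :
    C (x, y) = C (y, w) := by
  have m1 : ((w, x) : Fin n × Fin n) ∈ completeArcs n := mem_A.mpr hwx
  have m2 : ((x, y) : Fin n × Fin n) ∈ completeArcs n := mem_A.mpr (Ne.symm hyx)
  have m3 : ((y, w) : Fin n × Fin n) ∈ completeArcs n := mem_A.mpr hyw
  by_contra hne
  refine hnr ⟨w, x, y, m1, m2, m3, ?_, hne, ?_⟩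
  · intro he
    exact hIn y hyx (by rw [← he]; exact hw)
  · intro he
    rcases sat_incident hw m3 he with h | h
    · exact hyx h
    · exact hwx (h)

end Stmt16Aux

open Stmt16Aux in
/-- Every arc-colored complete digraph of order `n ≥ 4` without rainbow
triangles has a vertex `v` with `dˢ(v) ≤ ⌊n/2⌋`. -/
theorem stmt_16 (n : ℕ) (hn : 4 ≤ n) (C : Fin n × Fin n → ℕ)
    (hnr : ¬ hasRainbowTriangle (completeArcs n) C) :
    ∃ v : Fin n, (satColors (completeArcs n) C v).card ≤ n / 2 := by
  classical
  by_contra hno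
  push_neg at hno
  -- hno : ∀ v, n / 2 < (satColors (completeArcs n) C v).card
  -- Purity: each vertex is out-pure or in-pure
  have pure : ∀ v : Fin n,
      (∀ w, w ≠ v → ¬ Sat C v (C (w, v))) ∨ (∀ u, u ≠ v → ¬ Sat C v (C (v, u))) := by
    intro v
    by_contra hcon
    push_neg at hcon
    obtain ⟨⟨w, hwv, hw⟩, ⟨u, huv, hu⟩⟩ := hcon
    have hle : (satColors (completeArcs n) C v).card ≤ 2 := by
      by_cases huw : u = w
      · subst huw
        by_cases hex : ∃ z, z ≠ v ∧ z ≠ u ∧ (Sat C v (C (v, z)) ∨ Sat C v (C (z, v)))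
        · obtain ⟨z, hzv, hzu, hz | hz⟩ := hex
          · exact mixed_card hnr hzv huv hzu hz hw
          · exact mixed_card hnr huv hzv (fun e => hzu e.symm) hu hz
        · push_neg at hex
          apply card_le_pair (a := C (v, u)) (b := C (u, v))
          intro k hk
          have hk' : Sat C v k := hk
          simp only [Finset.mem_insert, Finset.mem_singleton]
          rcases sat_class hk' with ⟨u', h1, h2, h3⟩ | ⟨w', h1, h2, h3⟩
          · by_cases h : u' = u
            · subst h; exact Or.inl h2.symm
            · exact absurd h3 ((hex u' h1 h).1)
          · by_cases h : w' = u
            · subst h; exact Or.inr h2.symm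
            · exact absurd h3 ((hex w' h1 h).2)
      · exact mixed_card hnr huv hwv huw hu hw
    have := hno v
    omega
  -- The sets of out-arc saturation witnesses and in-arc saturation witnesses
  have keyOut : ∀ v : Fin n, (∀ w, w ≠ v → ¬ Sat C v (C (w, v))) →
      n / 2 < (Finset.univ.filter (fun u => u ≠ v ∧ Sat C v (C (v, u)))).card ∧
      ∀ u ∈ Finset.univ.filter (fun u => u ≠ v ∧ Sat C v (C (v, u))),
        ¬ (∀ w, w ≠ u → ¬ Sat C u (C (w, u))) := by
    intro v hOut
    constructor
    · have hsub : satColors (completeArcs n) C v ⊆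
          (Finset.univ.filter (fun u => u ≠ v ∧ Sat C v (C (v, u)))).image
            (fun u => C (v, u)) := by
        intro k hk
        have hk' : Sat C v k := hk
        rcases sat_class hk' with ⟨u', h1, h2, h3⟩ | ⟨w', h1, h2, h3⟩
        · exact Finset.mem_image.mpr ⟨u', Finset.mem_filter.mpr ⟨Finset.mem_univ _, h1, h3⟩, h2⟩
        · exact absurd h3 (hOut w' h1)
      have := (Finset.card_le_card hsub).trans Finset.card_image_le
      have := hno v
      omega
    · intro u hu hOu
      obtain ⟨-, huv, huSat⟩ := Finset.mem_filter.mp hu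
      have hsub : satColors (completeArcs n) C u ⊆ {C (u, v)} := by
        intro k hk
        have hk' : Sat C u k := hk
        rcases sat_class hk' with ⟨z, h1, h2, h3⟩ | ⟨w', h1, h2, h3⟩
        · by_cases hz : z = v
          · subst hz; simpa using h2.symm
          · have hcz : C (u, z) = C (z, v) := out_struct hnr hOut huv huSat h1 hz
            have mz : ((z, v) : Fin n × Fin n) ∈ completeArcs n := mem_A.mpr hz
            rcases sat_incident hk' mz (by rw [← hcz, h2]) with h | h
            · exact absurd h h1
            · exact absurd h.symm huv
        · exact absurd h3 (hOu w' h1)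
      have hle : (satColors (completeArcs n) C u).card ≤ 1 :=
        (Finset.card_le_card hsub).trans (by simp)
      have := hno u
      omega
  have keyIn : ∀ v : Fin n, (∀ u, u ≠ v → ¬ Sat C v (C (v, u))) →
      n / 2 < (Finset.univ.filter (fun w => w ≠ v ∧ Sat C v (C (w, v)))).card ∧
      ∀ w ∈ Finset.univ.filter (fun w => w ≠ v ∧ Sat C v (C (w, v))),
        ¬ (∀ u, u ≠ w → ¬ Sat C w (C (w, u))) := by
    intro v hIn
    constructor
    · have hsub : satColors (completeArcs n) C v ⊆
          (Finset.univ.filter (fun w => w ≠ v ∧ Sat C v (C (w, v)))).image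
            (fun w => C (w, v)) := by
        intro k hk
        have hk' : Sat C v k := hk
        rcases sat_class hk' with ⟨u', h1, h2, h3⟩ | ⟨w', h1, h2, h3⟩
        · exact absurd h3 (hIn u' h1)
        · exact Finset.mem_image.mpr ⟨w', Finset.mem_filter.mpr ⟨Finset.mem_univ _, h1, h3⟩, h2⟩
      have := (Finset.card_le_card hsub).trans Finset.card_image_le
      have := hno v
      omega
    · intro w hw hIw
      obtain ⟨-, hwv, hwSat⟩ := Finset.mem_filter.mp hw
      have hsub : satColors (completeArcs n) C w ⊆ {C (v, w)} := by
        intro k hk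
        have hk' : Sat C w k := hk
        rcases sat_class hk' with ⟨z, h1, h2, h3⟩ | ⟨y, h1, h2, h3⟩
        · exact absurd h3 (hIw z h1)
        · by_cases hy : y = v
          · subst hy; simpa using h2.symm
          · have hcy : C (v, y) = C (y, w) := in_struct hnr hIn hwv hwSat h1 hy
            have my : ((v, y) : Fin n × Fin n) ∈ completeArcs n := mem_A.mpr (Ne.symm hy)
            rcases sat_incident hk' my (by rw [hcy, h2]) with h | h
            · exact absurd h.symm hwv
            · exact absurd h h1
      have hle : (satColors (completeArcs n) C w).card ≤ 1 :=
        (Finset.card_le_card hsub).trans (by simp)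
      have := hno w
      omega
  -- Partition of vertices into out-pure / not out-pure
  set Od : Finset (Fin n) :=
    Finset.univ.filter (fun v => ∀ w, w ≠ v → ¬ Sat C v (C (w, v))) with hOdDef
  set Id : Finset (Fin n) :=
    Finset.univ.filter (fun v => ¬ ∀ w, w ≠ v → ¬ Sat C v (C (w, v))) with hIdDef
  have hsplit : Od.card + Id.card = n := by
    rw [hOdDef, hIdDef, Finset.card_filter_add_card_filter_not]
    simp
  -- If v is out-pure, its out-witnesses are in Id and there are > n/2 of them
  have hOdBig : ∀ v : Fin n, ¬ (∀ w, w ≠ v → ¬ Sat C v (C (w, v))) → n / 2 < Od.card := by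
    intro v hv
    have hvIn : ∀ u, u ≠ v → ¬ Sat C v (C (v, u)) := (pure v).resolve_left hv
    obtain ⟨h1, h2⟩ := keyIn v hvIn
    refine lt_of_lt_of_le h1 (Finset.card_le_card ?_)
    intro w hw
    have := h2 w hw
    -- w is not in-pure, hence out-pure
    rw [hOdDef, Finset.mem_filter]
    exact ⟨Finset.mem_univ _, (pure w).resolve_right this⟩
  have hIdBig : ∀ v : Fin n, (∀ w, w ≠ v → ¬ Sat C v (C (w, v))) → n / 2 < Id.card := by
    intro v hv
    obtain ⟨h1, h2⟩ := keyOut v hv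
    refine lt_of_lt_of_le h1 (Finset.card_le_card ?_)
    intro u hu
    rw [hIdDef, Finset.mem_filter]
    exact ⟨Finset.mem_univ _, h2 u hu⟩
  -- Conclude
  have v0 : Fin n := ⟨0, by omega⟩
  by_cases h0 : ∀ w, w ≠ v0 → ¬ Sat C v0 (C (w, v0))
  · have hId := hIdBig v0 h0
    -- pick u in the out-witness set of v0 -- it is not out-pure
    obtain ⟨hc, h2⟩ := keyOut v0 h0
    have hpos : 0 < (Finset.univ.filter (fun u => u ≠ v0 ∧ Sat C v0 (C (v0, u)))).card := by
      omega
    obtain ⟨u, hu⟩ := Finset.card_pos.mp hpos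
    have hOd := hOdBig u (h2 u hu)
    omega
  · have hOd := hOdBig v0 h0
    obtain ⟨w, hw⟩ : ∃ w, w ∈ Od := by
      have : 0 < Od.card := by omega
      exact Finset.card_pos.mp this
    have hwOut : ∀ x, x ≠ w → ¬ Sat C w (C (x, w)) := by
      rw [hOdDef, Finset.mem_filter] at hw
      exact hw.2
    have hId := hIdBig w hwOut
    omega
end

section
/- Let D be an arc-colored digraph of order 3 with a(D) + c(D) = 10 that contains no rainbow triangle. Then D is the complete digraph of order 3, i.e. the arc uv is present for every ordered pair of distinct vertices u, v. -/
lemma tri_of_card_five : ∀ A : Finset (Fin 3 × Fin 3), A ⊆ completeArcs 3 → A.card = 5 →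
    ∃ u v w : Fin 3, (u, v) ∈ A ∧ (v, w) ∈ A ∧ (w, u) ∈ A := by decide

/-- An arc-colored digraph of order 3 with `a(D) + c(D) = 10` and no rainbow
triangle is the complete digraph of order 3. -/
theorem stmt_17 (A : Finset (Fin 3 × Fin 3)) (hA : ∀ p ∈ A, p.1 ≠ p.2)
    (C : Fin 3 × Fin 3 → ℕ)
    (h : A.card + colorNum A C = 10)
    (hnr : ¬ hasRainbowTriangle A C) :
    ∀ u v : Fin 3, u ≠ v → (u, v) ∈ A := by
  have hsub : A ⊆ completeArcs 3 := fun p hp => by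
    simp [completeArcs, hA p hp]
  have hcA : A.card ≤ 6 := by
    have := Finset.card_le_card hsub
    have h6 : (completeArcs 3).card = 6 := by decide
    omega
  have hle : colorNum A C ≤ A.card := Finset.card_image_le
  rcases Nat.lt_or_ge A.card 6 with h5 | h6
  · -- A.card = 5, colorNum = 5, C injective on A
    have hc5 : A.card = 5 := by unfold colorNum at *; omega
    have hcn5 : colorNum A C = 5 := by omega
    have hinj : Set.InjOn C A := by
      apply Finset.injOn_of_card_image_eq
      rw [hc5]; exact hcn5
    obtain ⟨u, v, w, h1, h2, h3⟩ := tri_of_card_five A hsub hc5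
    exact absurd ⟨u, v, w, h1, h2, h3,
      fun hc => hA _ h1 (congrArg Prod.fst (hinj h1 h2 hc)),
      fun hc => hA _ h2 (congrArg Prod.fst (hinj h2 h3 hc)),
      fun hc => hA _ h3 (congrArg Prod.fst (hinj h3 h1 hc))⟩ hnr
  · have : A = completeArcs 3 := Finset.eq_of_subset_of_card_le hsub (by
      have h6' : (completeArcs 3).card = 6 := by decide
      omega)
    intro u v huv
    rw [this]
    simp [completeArcs, huv]
end

section
/- Let D be an arc-colored digraph on n vertices with color number c(D) ≥ ⌊n²/2⌋ + 1. Then D contains a rainbow triangle. -/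
lemma key {N : ℕ} (C : Fin N × Fin N → ℕ) (V : Finset (Fin N)) :
    ∀ (A : Finset (Fin N × Fin N)),
      (∀ p ∈ A, p.1 ∈ V ∧ p.2 ∈ V) → (∀ p ∈ A, p.1 ≠ p.2) →
      ¬ hasRainbowTriangle A C → colorNum A C ≤ V.card ^ 2 / 2 := by
  induction V using Finset.strongInduction with
  | _ V ih =>
  intro A hV hA hno
  by_cases hdb : ∃ u v : Fin N, (u, v) ∈ A ∧ (v, u) ∈ A
  · obtain ⟨u, v, huv, hvu⟩ := hdb
    have hune : u ≠ v := hA _ huv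
    have hu : u ∈ V := (hV _ huv).1
    have hv : v ∈ V := (hV _ huv).2
    set V' := V \ {u, v} with hV'def
    have hss : V' ⊂ V := by
      refine (Finset.ssubset_iff_of_subset (Finset.sdiff_subset)).2 ⟨u, hu, ?_⟩
      simp [hV'def]
    set A' := A.filter (fun p => p.1 ≠ u ∧ p.1 ≠ v ∧ p.2 ≠ u ∧ p.2 ≠ v) with hA'def
    have hsubA' : A' ⊆ A := Finset.filter_subset _ _
    have hIH : colorNum A' C ≤ V'.card ^ 2 / 2 := by
      apply ih V' hss
      · intro p hp
        have h1 := hV p (hsubA' hp)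
        have h2 := (Finset.mem_filter.1 hp).2
        simp only [hV'def, Finset.mem_sdiff, Finset.mem_insert, Finset.mem_singleton]
        exact ⟨⟨h1.1, by tauto⟩, ⟨h1.2, by tauto⟩⟩
      · exact fun p hp => hA p (hsubA' hp)
      · rintro ⟨a, b, c, h1, h2, h3, h4⟩
        exact hno ⟨a, b, c, hsubA' h1, hsubA' h2, hsubA' h3, h4⟩
    set S : Finset ℕ := insert (C (u, v)) (insert (C (v, u)) (A'.image C)) with hSdef
    set T : Finset ℕ := (A.image C) \ S with hTdef
    have hTmem : ∀ a ∈ T, a ≠ C (u, v) ∧ a ≠ C (v, u) := by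
      intro a ha
      simp only [hTdef, Finset.mem_sdiff, hSdef, Finset.mem_insert] at ha
      exact ⟨fun h => ha.2 (Or.inl h), fun h => ha.2 (Or.inr (Or.inl h))⟩
    have hpair : ∀ (p q : Fin N × Fin N),
        (p ∈ A → q ∈ A → C p ∈ T → C q ∈ T → C p = C q) →
        ((({p, q} : Finset (Fin N × Fin N)) ∩ A).image C ∩ T).card ≤ 1 := by
      intro p q hpq
      rw [Finset.card_le_one]
      intro a ha b hb
      simp only [Finset.mem_inter, Finset.mem_image, Finset.mem_insert,
        Finset.mem_singleton] at ha hb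
      obtain ⟨⟨r, ⟨hr1, hr2⟩, hrC⟩, haT⟩ := ha
      obtain ⟨⟨s, ⟨hs1, hs2⟩, hsC⟩, hbT⟩ := hb
      subst hrC hsC
      rcases hr1 with rfl | rfl <;> rcases hs1 with rfl | rfl
      · rfl
      · exact hpq hr2 hs2 haT hbT
      · exact (hpq hs2 hr2 hbT haT).symm
      · rfl
    have hG1 : ∀ w : Fin N,
        ((({(v, w), (w, u)} : Finset (Fin N × Fin N)) ∩ A).image C ∩ T).card ≤ 1 := by
      intro w
      refine hpair _ _ (fun h1 h2 hT1 hT2 => ?_)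
      by_contra hne
      exact hno ⟨u, v, w, huv, h1, h2, fun h => (hTmem _ hT1).1 h.symm, hne, (hTmem _ hT2).1⟩
    have hG2 : ∀ w : Fin N,
        ((({(u, w), (w, v)} : Finset (Fin N × Fin N)) ∩ A).image C ∩ T).card ≤ 1 := by
      intro w
      refine hpair _ _ (fun h1 h2 hT1 hT2 => ?_)
      by_contra hne
      exact hno ⟨v, u, w, hvu, h1, h2, fun h => (hTmem _ hT1).2 h.symm, hne, (hTmem _ hT2).2⟩
    have hcov : T ⊆ V'.biUnion (fun w =>
        (({(v, w), (w, u)} : Finset (Fin N × Fin N)) ∩ A).image C ∩ T ∪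
        (({(u, w), (w, v)} : Finset (Fin N × Fin N)) ∩ A).image C ∩ T) := by
      intro t ht
      have ht' := ht
      rw [hTdef, Finset.mem_sdiff] at ht'
      obtain ⟨htA, htS⟩ := ht'
      rw [Finset.mem_image] at htA
      obtain ⟨p, hpA, hpC⟩ := htA
      obtain ⟨p1, p2⟩ := p
      have hne12 : p1 ≠ p2 := hA _ hpA
      have hne1 : (p1, p2) ≠ (u, v) := by
        rintro h; rw [h] at hpC; exact htS (by rw [hSdef, ← hpC]; exact Finset.mem_insert_self _ _)
      have hne2 : (p1, p2) ≠ (v, u) := by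
        rintro h; rw [h] at hpC
        exact htS (by rw [hSdef, ← hpC]
                      exact Finset.mem_insert_of_mem (Finset.mem_insert_self _ _))
      have hpA' : (p1, p2) ∉ A' := by
        intro h
        exact htS (by rw [hSdef, ← hpC]
                      exact Finset.mem_insert_of_mem (Finset.mem_insert_of_mem
                        (Finset.mem_image_of_mem C h)))
      have hcond : ¬(p1 ≠ u ∧ p1 ≠ v ∧ p2 ≠ u ∧ p2 ≠ v) := by
        intro h; exact hpA' (Finset.mem_filter.2 ⟨hpA, h⟩)
      have hmemV := hV _ hpA
      rw [Finset.mem_biUnion]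
      rcases eq_or_ne p1 u with rfl | h1
      · -- arc (u, p2), group 2, w = p2
        have hw2 : p2 ≠ v := fun h => hne1 (by rw [h])
        refine ⟨p2, ?_, Finset.mem_union_right _ (Finset.mem_inter.2 ⟨?_, ht⟩)⟩
        · rw [hV'def, Finset.mem_sdiff]
          simp only [Finset.mem_insert, Finset.mem_singleton]
          exact ⟨hmemV.2, by tauto⟩
        · rw [← hpC]
          exact Finset.mem_image_of_mem C (Finset.mem_inter.2 ⟨by simp, hpA⟩)
      rcases eq_or_ne p1 v with rfl | h2
      · -- arc (v, p2), group 1, w = p2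
        have hw2 : p2 ≠ u := fun h => hne2 (by rw [h])
        refine ⟨p2, ?_, Finset.mem_union_left _ (Finset.mem_inter.2 ⟨?_, ht⟩)⟩
        · rw [hV'def, Finset.mem_sdiff]
          simp only [Finset.mem_insert, Finset.mem_singleton]
          exact ⟨hmemV.2, by tauto⟩
        · rw [← hpC]
          exact Finset.mem_image_of_mem C (Finset.mem_inter.2 ⟨by simp, hpA⟩)
      rcases eq_or_ne p2 u with rfl | h3
      · -- arc (p1, u), group 1, w = p1
        refine ⟨p1, ?_, Finset.mem_union_left _ (Finset.mem_inter.2 ⟨?_, ht⟩)⟩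
        · rw [hV'def, Finset.mem_sdiff]
          simp only [Finset.mem_insert, Finset.mem_singleton]
          exact ⟨hmemV.1, by tauto⟩
        · rw [← hpC]
          exact Finset.mem_image_of_mem C (Finset.mem_inter.2 ⟨by simp, hpA⟩)
      rcases eq_or_ne p2 v with rfl | h4
      · -- arc (p1, v), group 2, w = p1
        refine ⟨p1, ?_, Finset.mem_union_right _ (Finset.mem_inter.2 ⟨?_, ht⟩)⟩
        · rw [hV'def, Finset.mem_sdiff]
          simp only [Finset.mem_insert, Finset.mem_singleton]
          exact ⟨hmemV.1, by tauto⟩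
        · rw [← hpC]
          exact Finset.mem_image_of_mem C (Finset.mem_inter.2 ⟨by simp, hpA⟩)
      exact absurd ⟨h1, h2, h3, h4⟩ hcond
    have hTcard : T.card ≤ 2 * V'.card := by
      calc T.card ≤ _ := Finset.card_le_card hcov
        _ ≤ ∑ w ∈ V', ((({(v, w), (w, u)} : Finset (Fin N × Fin N)) ∩ A).image C ∩ T ∪
            (({(u, w), (w, v)} : Finset (Fin N × Fin N)) ∩ A).image C ∩ T).card :=
          Finset.card_biUnion_le
        _ ≤ ∑ _w ∈ V', 2 := Finset.sum_le_sum (fun w _ => by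
            have := Finset.card_union_le
              ((({(v, w), (w, u)} : Finset (Fin N × Fin N)) ∩ A).image C ∩ T)
              ((({(u, w), (w, v)} : Finset (Fin N × Fin N)) ∩ A).image C ∩ T)
            have := hG1 w; have := hG2 w; omega)
        _ = 2 * V'.card := by rw [Finset.sum_const, smul_eq_mul, mul_comm]
    have hsplit : (A.image C).card ≤ T.card + S.card := by
      have hsub : A.image C ⊆ T ∪ S := by
        intro a ha
        rw [Finset.mem_union]
        by_cases h : a ∈ S
        · exact Or.inr h
        · exact Or.inl (by rw [hTdef, Finset.mem_sdiff]; exact ⟨ha, h⟩)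
      exact le_trans (Finset.card_le_card hsub) (Finset.card_union_le _ _)
    have hScard : S.card ≤ 2 + colorNum A' C := by
      rw [hSdef]
      have h1 := Finset.card_insert_le (C (u, v)) (insert (C (v, u)) (A'.image C))
      have h2 := Finset.card_insert_le (C (v, u)) (A'.image C)
      unfold colorNum
      omega
    have hVcard : V.card = V'.card + 2 := by
      have hsub : ({u, v} : Finset (Fin N)) ⊆ V := by
        intro x hx
        simp only [Finset.mem_insert, Finset.mem_singleton] at hx
        rcases hx with rfl | rfl
        exacts [hu, hv]
      have hc2 : ({u, v} : Finset (Fin N)).card = 2 := by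
        rw [Finset.card_insert_of_notMem (by simpa using hune), Finset.card_singleton]
      have hle := Finset.card_le_card hsub
      rw [hV'def, Finset.card_sdiff_of_subset hsub, hc2]
      omega
    have hsq : V.card ^ 2 = V'.card ^ 2 + (2 * V'.card + 2) * 2 := by rw [hVcard]; ring
    have hfinal : ∀ q cA cA' tc sc : ℕ, cA' ≤ q → cA ≤ tc + sc → tc ≤ 2 * V'.card →
        sc ≤ 2 + cA' → cA ≤ q + (2 * V'.card + 2) := by
      intro q cA cA' tc sc h1 h2 h3 h4; omega
    have : colorNum A C ≤ V'.card ^ 2 / 2 + (2 * V'.card + 2) :=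
      hfinal _ _ _ _ _ hIH hsplit hTcard hScard
    rw [hsq, Nat.add_mul_div_right _ _ (by norm_num : (0:ℕ) < 2)]
    exact this
  · push_neg at hdb
    have hinj : Function.Injective (Prod.swap : Fin N × Fin N → Fin N × Fin N) :=
      Prod.swap_injective
    have hdisj : Disjoint A (A.image Prod.swap) := by
      rw [Finset.disjoint_left]
      intro p hp hps
      rw [Finset.mem_image] at hps
      obtain ⟨q, hq, hqs⟩ := hps
      have hq' : q = (p.2, p.1) := by
        have := congrArg Prod.swap hqs
        rw [Prod.swap_swap] at this
        rw [this]; rfl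
      rw [hq'] at hq
      exact hdb p.1 p.2 (by simpa using hp) hq
    have hsub : A ∪ A.image Prod.swap ⊆ V ×ˢ V := by
      intro p hp
      rw [Finset.mem_union] at hp
      rcases hp with hp | hp
      · exact Finset.mem_product.2 (hV p hp)
      · rw [Finset.mem_image] at hp
        obtain ⟨q, hq, rfl⟩ := hp
        exact Finset.mem_product.2 ⟨(hV q hq).2, (hV q hq).1⟩
    have h2A : A.card * 2 ≤ V.card ^ 2 := by
      have h1 := Finset.card_le_card hsub
      rw [Finset.card_union_of_disjoint hdisj, Finset.card_image_of_injective _ hinj,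
        Finset.card_product] at h1
      have h2 : V.card * V.card = V.card ^ 2 := (pow_two V.card).symm
      omega
    rw [Nat.le_div_iff_mul_le (by norm_num : (0:ℕ) < 2)]
    have h3 : colorNum A C ≤ A.card := Finset.card_image_le
    omega


/-- An arc-colored digraph on `n` vertices with color number at least
`⌊n²/2⌋ + 1` contains a rainbow triangle. -/
theorem stmt_19 (n : ℕ) (A : Finset (Fin n × Fin n))
    (hA : ∀ p ∈ A, p.1 ≠ p.2) (C : Fin n × Fin n → ℕ)
    (hc : n ^ 2 / 2 + 1 ≤ colorNum A C) :
    hasRainbowTriangle A C := by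
  by_contra hno
  have h := key C Finset.univ A (fun p _ => ⟨Finset.mem_univ _, Finset.mem_univ _⟩) hA hno
  rw [Finset.card_univ, Fintype.card_fin] at h
  omega
end
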